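/- arXiv:1707.05190 — 5 statements merged into one kernel-verified Lean document; each statement's English description precedes it below -/
import Mathlib

section
/- Let (η, v) be a solution of the Lagrangian delayed Cucker–Smale system with η ∈ C¹ in time and v continuous, and set R_V := max_{s∈[−τ,0]} max_{x∈cl(Ω₀)} |v_s(x)| < ∞. Then |v_t(x)| ≤ R_V for all t ≥ 0 and all x ∈ cl(Ω₀). -/
open MeasureTheory Real Set Filter
open Topology

noncomputable section

/-- Points of `ℝ^d`. -/
abbrev Euc (d : ℕ) := EuclideanSpace ℝ (Fin d)

/-- `(η, v)` is a solution of the Lagrangian delayed Cucker–Smale system on `Ω₀`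
with delay `τ`, mass density `ρ₀` and influence function `ψ`:
`η 0 x = x`, `∂ₜ η t x = v t x` for `t ≥ -τ`, and for `t > 0`, `x ∈ Ω₀`,
`∂ₜ v t x = (∫_{Ω₀} ψ(η_t(x) - η_{t-τ}(y)) ρ₀(y) v_{t-τ}(y) dy) /
            (∫_{Ω₀} ψ(η_t(x) - η_{t-τ}(y)) ρ₀(y) dy) - v t x`. -/
def IsCSSol (d : ℕ) (τ : ℝ) (Ω₀ : Set (Euc d)) (ρ₀ : Euc d → ℝ) (ψ : Euc d → ℝ)
    (η v : ℝ → Euc d → Euc d) : Prop :=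
  (∀ x ∈ closure Ω₀, η 0 x = x) ∧
  (∀ x ∈ closure Ω₀, ∀ t : ℝ, -τ ≤ t →
    HasDerivWithinAt (fun s => η s x) (v t x) (Set.Ici (-τ)) t) ∧
  (∀ x ∈ Ω₀, ∀ t : ℝ, 0 < t →
    HasDerivAt (fun s => v s x)
      (((∫ y in Ω₀, ψ (η t x - η (t - τ) y) * ρ₀ y)⁻¹ •
        ∫ y in Ω₀, (ψ (η t x - η (t - τ) y) * ρ₀ y) • v (t - τ) y) - v t x) t)

/-- The influence function `ψ` is Lipschitz, radially symmetric `ψ(x) = ψt(|x|)` with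
`ψt` positive and nonincreasing on `[0,∞)` and `ψt 0 = 1`. -/
def GoodInfluence (d : ℕ) (ψ : Euc d → ℝ) (ψt : ℝ → ℝ) : Prop :=
  (∀ x, ψ x = ψt ‖x‖) ∧ (∀ r : ℝ, 0 ≤ r → 0 < ψt r) ∧
    AntitoneOn ψt (Set.Ici 0) ∧ ψt 0 = 1 ∧ ∃ K : NNReal, LipschitzWith K ψ

/-- `ρ₀` is a nonnegative measurable probability density supported in `Ω₀`. -/
def GoodDensity (d : ℕ) (Ω₀ : Set (Euc d)) (ρ₀ : Euc d → ℝ) : Prop :=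
  Measurable ρ₀ ∧ (∀ y, 0 ≤ ρ₀ y) ∧ (∀ y, y ∉ Ω₀ → ρ₀ y = 0) ∧
    IntegrableOn ρ₀ Ω₀ ∧ ∫ y in Ω₀, ρ₀ y = 1

/-- `R_V := max_{s ∈ [-τ,0]} max_{x ∈ cl Ω₀} |v_s(x)|` (as a supremum). -/
def velBound (d : ℕ) (τ : ℝ) (Ω₀ : Set (Euc d)) (v : ℝ → Euc d → Euc d) : ℝ :=
  sSup {r : ℝ | ∃ s ∈ Set.Icc (-τ) 0, ∃ x ∈ closure Ω₀, r = ‖v s x‖}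

/-- The diameter `max_{x,y ∈ cl Ω₀} |f(x) - f(y)|` (as a supremum); applied to `η t`
it gives `d_X(t)` and applied to `v t` it gives `d_V(t)`. -/
def diamF (d : ℕ) (Ω₀ : Set (Euc d)) (f : Euc d → Euc d) : ℝ :=
  sSup {r : ℝ | ∃ x ∈ closure Ω₀, ∃ y ∈ closure Ω₀, r = ‖f x - f y‖}

/-- **Uniform velocity bound (Lemma 4.1).** For a solution of the Lagrangian delayed
Cucker–Smale system with `R_V := max_{s∈[-τ,0]} max_{x∈cl Ω₀} |v_s(x)| < ∞`,
one has `|v_t(x)| ≤ R_V` for all `t ≥ 0` and `x ∈ cl Ω₀`. -/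
theorem stmt_3 {d : ℕ} (τ : ℝ) (hτ : 0 < τ)
    (Ω₀ : Set (Euc d)) (hΩo : IsOpen Ω₀) (hΩne : Ω₀.Nonempty)
    (hΩb : Bornology.IsBounded Ω₀)
    (ρ₀ : Euc d → ℝ) (hρ : GoodDensity d Ω₀ ρ₀)
    (ψ : Euc d → ℝ) (ψt : ℝ → ℝ) (hψ : GoodInfluence d ψ ψt)
    (η v : ℝ → Euc d → Euc d)
    (hsol : IsCSSol d τ Ω₀ ρ₀ ψ η v)
    (hη_cont : ContinuousOn (fun p : ℝ × Euc d => η p.1 p.2)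
      (Set.Ici (-τ) ×ˢ closure Ω₀))
    (hv_cont : ContinuousOn (fun p : ℝ × Euc d => v p.1 p.2)
      (Set.Ici (-τ) ×ˢ closure Ω₀))
    (hRV_fin : BddAbove {r : ℝ | ∃ s ∈ Set.Icc (-τ) 0, ∃ x ∈ closure Ω₀, r = ‖v s x‖}) :
    ∀ t, 0 ≤ t → ∀ x ∈ closure Ω₀, ‖v t x‖ ≤ velBound d τ Ω₀ v := by
  obtain ⟨hη0, hηd, hvd⟩ := hsol
  obtain ⟨hrad, hpos, hanti, hone, K, hlip⟩ := hψ
  obtain ⟨hρm, hρnn, hρsupp, hρint, hρ1⟩ := hρ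
  set R := velBound d τ Ω₀ v with hR
  have hmem : ∀ s ∈ Icc (-τ) 0, ∀ x ∈ closure Ω₀, ‖v s x‖ ≤ R := by
    intro s hs x hx
    exact le_csSup hRV_fin ⟨s, hs, x, hx, rfl⟩
  obtain ⟨x₀, hx₀⟩ := hΩne
  have hx₀c : x₀ ∈ closure Ω₀ := subset_closure hx₀
  have hR0 : 0 ≤ R :=
    le_trans (norm_nonneg _) (hmem 0 ⟨by linarith, le_refl 0⟩ x₀ hx₀c)
  have hψ0 : ∀ z, 0 ≤ ψ z := fun z => by
    rw [hrad]; exact (hpos _ (norm_nonneg z)).le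
  have hψ1 : ∀ z, ψ z ≤ 1 := fun z => by
    rw [hrad, ← hone]
    exact hanti (mem_Ici.2 le_rfl) (mem_Ici.2 (norm_nonneg z)) (norm_nonneg z)
  have hψc : Continuous ψ := hlip.continuous
  have hv_slice : ∀ t : ℝ, -τ ≤ t → ContinuousOn (fun y => v t y) (closure Ω₀) := by
    intro t ht
    exact hv_cont.comp (continuous_const.prodMk continuous_id).continuousOn
      (fun y hy => ⟨ht, hy⟩)
  have hη_slice : ∀ t : ℝ, -τ ≤ t → ContinuousOn (fun y => η t y) (closure Ω₀) := by
    intro t ht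
    exact hη_cont.comp (continuous_const.prodMk continuous_id).continuousOn
      (fun y hy => ⟨ht, hy⟩)
  have hv_time : ∀ x ∈ closure Ω₀, ContinuousOn (fun s => v s x) (Ici (-τ)) := by
    intro x hx
    exact hv_cont.comp (continuous_id.prodMk continuous_const).continuousOn
      (fun s hs => ⟨hs, hx⟩)
  -- bound on the averaged velocity
  have havg : ∀ t : ℝ, 0 ≤ t → (∀ y ∈ closure Ω₀, ‖v (t - τ) y‖ ≤ R) → ∀ x : Euc d,
      ‖(∫ y in Ω₀, ψ (η t x - η (t - τ) y) * ρ₀ y)⁻¹ •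
        ∫ y in Ω₀, (ψ (η t x - η (t - τ) y) * ρ₀ y) • v (t - τ) y‖ ≤ R := by
    intro t ht hprev x
    set w : Euc d → ℝ := fun y => ψ (η t x - η (t - τ) y) * ρ₀ y with hw
    have hτt : -τ ≤ t - τ := by linarith
    have hwnn : ∀ y, 0 ≤ w y := fun y => mul_nonneg (hψ0 _) (hρnn y)
    have hwle : ∀ y, w y ≤ ρ₀ y := fun y => by
      calc w y ≤ 1 * ρ₀ y := mul_le_mul_of_nonneg_right (hψ1 _) (hρnn y)
      _ = ρ₀ y := one_mul _
    have hηm : AEStronglyMeasurable (fun y => η (t - τ) y) (volume.restrict Ω₀) :=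
      ((hη_slice (t - τ) hτt).mono subset_closure).aestronglyMeasurable hΩo.measurableSet
    have hwm : AEStronglyMeasurable w (volume.restrict Ω₀) :=
      (((hψc.comp (continuous_const.sub continuous_id)).comp_aestronglyMeasurable hηm).mul
        hρm.aestronglyMeasurable)
    have hvm : AEStronglyMeasurable (fun y => v (t - τ) y) (volume.restrict Ω₀) :=
      ((hv_slice (t - τ) hτt).mono subset_closure).aestronglyMeasurable hΩo.measurableSet
    have hIw : IntegrableOn w Ω₀ := by
      apply hρint.mono' hwm
      filter_upwards with y
      rw [Real.norm_eq_abs, abs_of_nonneg (hwnn y)]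
      exact hwle y
    have hIwv : IntegrableOn (fun y => w y • v (t - τ) y) Ω₀ := by
      apply (hρint.const_mul R).mono' (hwm.smul hvm)
      filter_upwards [ae_restrict_mem hΩo.measurableSet] with y hy
      rw [Pi.smul_apply', norm_smul, Real.norm_eq_abs, abs_of_nonneg (hwnn y)]
      calc w y * ‖v (t - τ) y‖ ≤ ρ₀ y * R :=
            mul_le_mul (hwle y) (hprev y (subset_closure hy)) (norm_nonneg _) (hρnn y)
        _ = R * ρ₀ y := mul_comm _ _
    have hc0 : 0 ≤ ∫ y in Ω₀, w y :=
      setIntegral_nonneg hΩo.measurableSet (fun y _ => hwnn y)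
    have hkey : ‖∫ y in Ω₀, w y • v (t - τ) y‖ ≤ (∫ y in Ω₀, w y) * R := by
      calc ‖∫ y in Ω₀, w y • v (t - τ) y‖ ≤ ∫ y in Ω₀, ‖w y • v (t - τ) y‖ :=
            norm_integral_le_integral_norm _
        _ ≤ ∫ y in Ω₀, w y * R := by
            apply setIntegral_mono_on hIwv.norm (hIw.mul_const R) hΩo.measurableSet
            intro y hy
            rw [norm_smul, Real.norm_eq_abs, abs_of_nonneg (hwnn y)]
            exact mul_le_mul_of_nonneg_left (hprev y (subset_closure hy)) (hwnn y)
        _ = (∫ y in Ω₀, w y) * R := by rw [integral_mul_const]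
    rcases eq_or_lt_of_le hc0 with hc | hc
    · have hI0 : (∫ y in Ω₀, w y • v (t - τ) y) = 0 := by
        rw [← hc, zero_mul] at hkey
        exact norm_le_zero_iff.1 hkey
      rw [hI0, smul_zero, norm_zero]
      exact hR0
    · rw [norm_smul, Real.norm_eq_abs, abs_inv, abs_of_nonneg hc0, inv_mul_le_iff₀ hc]
      calc ‖∫ y in Ω₀, w y • v (t - τ) y‖ ≤ (∫ y in Ω₀, w y) * R := hkey
        _ = (∫ y in Ω₀, w y) * R := rfl
  -- the one-step propagation
  have hstep : ∀ a : ℝ, 0 ≤ a → (∀ s ∈ Icc (-τ) a, ∀ y ∈ closure Ω₀, ‖v s y‖ ≤ R) →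
      ∀ t ∈ Icc a (a + τ), ∀ x ∈ closure Ω₀, ‖v t x‖ ≤ R := by
    intro a ha hprev t ht x hx
    have hta : -τ ≤ t := by linarith [ht.1]
    suffices hΩcase : ∀ z ∈ Ω₀, ‖v t z‖ ≤ R by
      have hne : (𝓝[Ω₀] x).NeBot := mem_closure_iff_nhdsWithin_neBot.1 hx
      refine le_of_tendsto ((((hv_slice t hta).norm x hx)).mono subset_closure) ?_
      exact eventually_mem_nhdsWithin.mono (fun z hz => hΩcase z hz)
    clear hx x
    intro x hx
    rcases eq_or_lt_of_le ht.1 with heq | hat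
    · rw [← heq]
      exact hprev a ⟨by linarith, le_rfl⟩ x (subset_closure hx)
    have hmain : ∀ s ∈ Ioo a t,
        Real.exp t * ‖v t x‖ ≤ R * Real.exp t + (Real.exp s * ‖v s x‖ - R * Real.exp s) := by
      intro s hs
      have hs0 : 0 < s := lt_of_le_of_lt ha hs.1
      set A : ℝ → Euc d := fun u =>
        (∫ y in Ω₀, ψ (η u x - η (u - τ) y) * ρ₀ y)⁻¹ •
          ∫ y in Ω₀, (ψ (η u x - η (u - τ) y) * ρ₀ y) • v (u - τ) y with hA
      have hfd : ∀ u, 0 < u →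
          HasDerivAt (fun r => Real.exp r • v r x) (Real.exp u • A u) u := by
        intro u hu
        have h1 := hvd x hx u hu
        have h2 : HasDerivAt Real.exp (Real.exp u) u := Real.hasDerivAt_exp u
        have h3 := h2.smul h1
        exact h3.congr_deriv (by rw [hA, smul_sub]; abel)
      have hfc : ContinuousOn (fun r => Real.exp r • v r x) (Icc s t) := by
        apply ContinuousOn.smul Real.continuous_exp.continuousOn
        apply (hv_time x (subset_closure hx)).mono
        intro u hu
        exact le_trans (by linarith) hu.1
      set B : ℝ → ℝ := fun u =>
        R * Real.exp u + (Real.exp s * ‖v s x‖ - R * Real.exp s) with hBdef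
      have hB' : ∀ u, HasDerivAt B (R * Real.exp u) u := by
        intro u
        exact ((Real.hasDerivAt_exp u).const_mul R).add_const
          (Real.exp s * ‖v s x‖ - R * Real.exp s)
      have hbound : ∀ u ∈ Ico s t, ‖Real.exp u • A u‖ ≤ R * Real.exp u := by
        intro u hu
        have hu0 : 0 < u := lt_of_lt_of_le hs0 hu.1
        have h2 : ∀ y ∈ closure Ω₀, ‖v (u - τ) y‖ ≤ R := by
          intro y hy
          refine hprev (u - τ) ⟨by linarith, by linarith [hu.2, ht.2]⟩ y hy
        rw [norm_smul, Real.norm_eq_abs, abs_of_pos (Real.exp_pos u), mul_comm]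
        exact mul_le_mul_of_nonneg_right (havg u hu0.le h2 x) (Real.exp_pos u).le
      have hcomp := image_norm_le_of_norm_deriv_right_le_deriv_boundary hfc
        (fun u hu => (hfd u (lt_of_lt_of_le hs0 hu.1)).hasDerivWithinAt)
        (le_of_eq (by rw [hBdef]; rw [norm_smul, Real.norm_eq_abs,
          abs_of_pos (Real.exp_pos s)]; ring)) hB' hbound
      have hend := hcomp (right_mem_Icc.2 hs.2.le)
      rw [norm_smul, Real.norm_eq_abs, abs_of_pos (Real.exp_pos t)] at hend
      exact hend
    have hne : (𝓝[Ioo a t] a).NeBot := by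
      apply mem_closure_iff_nhdsWithin_neBot.1
      rw [closure_Ioo hat.ne]
      exact left_mem_Icc.2 hat.le
    have hsub : Ioo a t ⊆ Ici (-τ) := fun u hu => le_trans (by linarith) hu.1.le
    have hvt : Tendsto (fun s => v s x) (𝓝[Ioo a t] a) (𝓝 (v a x)) := by
      have hc : ContinuousWithinAt (fun s => v s x) (Ici (-τ)) a :=
        hv_time x (subset_closure hx) a (by simp only [mem_Ici]; linarith)
      exact hc.tendsto.mono_left (nhdsWithin_mono a hsub)
    have hexp : Tendsto (fun s : ℝ => Real.exp s) (𝓝[Ioo a t] a) (𝓝 (Real.exp a)) :=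
      (Real.continuous_exp.tendsto a).mono_left nhdsWithin_le_nhds
    have hga : Tendsto (fun s => R * Real.exp t + (Real.exp s * ‖v s x‖ - R * Real.exp s))
        (𝓝[Ioo a t] a) (𝓝 (R * Real.exp t + (Real.exp a * ‖v a x‖ - R * Real.exp a))) :=
      tendsto_const_nhds.add ((hexp.mul hvt.norm).sub (tendsto_const_nhds.mul hexp))
    have hlim : Real.exp t * ‖v t x‖ ≤
        R * Real.exp t + (Real.exp a * ‖v a x‖ - R * Real.exp a) :=
      ge_of_tendsto hga (eventually_mem_nhdsWithin.mono (fun s hs => hmain s hs))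
    have hva : ‖v a x‖ ≤ R := hprev a ⟨by linarith, le_rfl⟩ x (subset_closure hx)
    have hkey : Real.exp t * ‖v t x‖ ≤ R * Real.exp t := by
      nlinarith [Real.exp_pos a]
    nlinarith [Real.exp_pos t]
  -- induction over time intervals of length τ
  have hind : ∀ n : ℕ, ∀ s ∈ Icc (-τ) ((n : ℝ) * τ), ∀ x ∈ closure Ω₀, ‖v s x‖ ≤ R := by
    intro n
    induction n with
    | zero => simpa using hmem
    | succ n ih =>
      intro s hs x hx
      rcases le_or_gt s ((n : ℝ) * τ) with h | h
      · exact ih s ⟨hs.1, h⟩ x hx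
      · refine hstep ((n : ℝ) * τ) (by positivity) ih s ⟨h.le, ?_⟩ x hx
        have := hs.2
        push_cast at this ⊢
        linarith
  intro t ht x hx
  obtain ⟨n, hn⟩ := exists_nat_ge (t / τ)
  have htn : t ≤ (n : ℝ) * τ := by
    rw [div_le_iff₀ hτ] at hn
    linarith
  exact hind n t ⟨by linarith, htn⟩ x hx
end
end

section
/- Let (η, v) be a solution of the Lagrangian delayed Cucker–Smale system and define, for t ≥ 0, X(t) := d_X(0) + ∫₀ᵗ d_V(s) ds and V(t) := d_V(0)·e^{−t} + ∫₀ᵗ [1 − ψ̃(X(s−τ) + R_V·τ)] · d_V(s−τ) · e^{s−t} ds, while X(t) := d_X(t) and V(t) := d_V(t) for t ∈ [−τ,0]. Then for all t > 0: (i) X'(t) = d_V(t); (ii) V'(t) ≤ −V(t) + [1 − ψ̃(X(t−τ) + R_V·τ)]·V(t−τ); and moreover (iii) d_V(t) ≤ V(t) for all t ≥ −τ. -/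
open MeasureTheory Real Set Filter

noncomputable section

section AuxLemmas

variable {Y : Type*} [MeasurableSpace Y] {E : Type*} [NormedAddCommGroup E] [NormedSpace ℝ E]

lemma avg_close [CompleteSpace E] {μ : Measure Y} {q : Y → ℝ} {u : Y → E} (c : E) (D : ℝ)
    (hq : 0 ≤ᵐ[μ] q) (hqi : Integrable q μ) (hqu : Integrable (fun y => q y • u y) μ)
    (hbd : ∀ᵐ y ∂μ, ‖u y - c‖ ≤ D) :
    ‖(∫ y, q y • u y ∂μ) - (∫ y, q y ∂μ) • c‖ ≤ (∫ y, q y ∂μ) * D := by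
  have h1 : (∫ y, q y ∂μ) • c = ∫ y, q y • c ∂μ := (integral_smul_const q c).symm
  rw [h1, ← MeasureTheory.integral_sub hqu (hqi.smul_const c)]
  calc ‖∫ y, (q y • u y - q y • c) ∂μ‖ ≤ ∫ y, ‖q y • u y - q y • c‖ ∂μ :=
        MeasureTheory.norm_integral_le_integral_norm _
    _ ≤ ∫ y, q y * D ∂μ := by
        apply MeasureTheory.integral_mono_ae ((hqu.sub (hqi.smul_const c)).norm)
          (hqi.mul_const D)
        filter_upwards [hq, hbd] with y hy1 hy2
        simp only [Pi.sub_apply]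
        rw [← smul_sub, norm_smul, Real.norm_eq_abs, abs_of_nonneg hy1]
        exact mul_le_mul_of_nonneg_left hy2 hy1
    _ = (∫ y, q y ∂μ) * D := by
        simpa [smul_eq_mul, mul_comm] using integral_smul_const (μ := μ) q D

lemma avg_diff_le [CompleteSpace E] {μ : Measure Y} {q₁ q₂ : Y → ℝ} {u : Y → E} {s : Set Y}
    {D : ℝ}
    (hs : ∀ᵐ y ∂μ, y ∈ s)
    (hq₁ : 0 ≤ᵐ[μ] q₁) (hq₂ : 0 ≤ᵐ[μ] q₂)
    (hq₁i : Integrable q₁ μ) (hq₂i : Integrable q₂ μ)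
    (hq₁u : Integrable (fun y => q₁ y • u y) μ) (hq₂u : Integrable (fun y => q₂ y • u y) μ)
    (heq : ∫ y, q₁ y ∂μ = ∫ y, q₂ y ∂μ)
    (hbd : ∀ y ∈ s, ∀ z ∈ s, ‖u y - u z‖ ≤ D) (hD : 0 ≤ D) :
    ‖(∫ y, q₁ y • u y ∂μ) - ∫ y, q₂ y • u y ∂μ‖ ≤ (∫ y, q₁ y ∂μ) * D := by
  have ha0 : 0 ≤ ∫ y, q₁ y ∂μ := MeasureTheory.integral_nonneg_of_ae hq₁
  rcases eq_or_lt_of_le ha0 with h0 | hpos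
  · have hz1 : q₁ =ᵐ[μ] 0 :=
      (MeasureTheory.integral_eq_zero_iff_of_nonneg_ae hq₁ hq₁i).mp h0.symm
    have hz2 : q₂ =ᵐ[μ] 0 := by
      apply (MeasureTheory.integral_eq_zero_iff_of_nonneg_ae hq₂ hq₂i).mp
      rw [← heq]; exact h0.symm
    have e1 : ∫ y, q₁ y • u y ∂μ = 0 := by
      rw [MeasureTheory.integral_eq_zero_of_ae]
      filter_upwards [hz1] with y hy; simp [hy]
    have e2 : ∫ y, q₂ y • u y ∂μ = 0 := by
      rw [MeasureTheory.integral_eq_zero_of_ae]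
      filter_upwards [hz2] with y hy; simp [hy]
    simp [e1, e2, ← h0]
  · set a := ∫ y, q₁ y ∂μ with ha
    set c := a⁻¹ • ∫ y, q₂ y • u y ∂μ with hc
    have hstep : ∀ y ∈ s, ‖u y - c‖ ≤ D := by
      intro y hy
      have h1 : ‖(∫ z, q₂ z • u z ∂μ) - (∫ z, q₂ z ∂μ) • (u y)‖ ≤ (∫ z, q₂ z ∂μ) * D :=
        avg_close (u y) D hq₂ hq₂i hq₂u (hs.mono fun z hz => hbd z hz y hy)
      rw [← heq] at h1
      have h2 : u y - c = a⁻¹ • (a • u y - ∫ z, q₂ z • u z ∂μ) := by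
        rw [smul_sub, inv_smul_smul₀ hpos.ne', hc]
      rw [h2, norm_smul, norm_inv, Real.norm_eq_abs, abs_of_pos hpos, norm_sub_rev]
      calc a⁻¹ * ‖(∫ z, q₂ z • u z ∂μ) - a • u y‖ ≤ a⁻¹ * (a * D) := by
            apply mul_le_mul_of_nonneg_left h1 (by positivity)
        _ = D := by field_simp
    have h2 := avg_close c D hq₁ hq₁i hq₁u
      (hs.mono fun y hy => hstep y hy)
    have hac : a • c = ∫ y, q₂ y • u y ∂μ := smul_inv_smul₀ hpos.ne' _
    rw [← hac]
    exact h2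

lemma le_on_closure' {E' : Type*} [TopologicalSpace E'] {f : E' → ℝ} {s : Set E'} {c : ℝ}
    (hf : ContinuousOn f (closure s)) (h : ∀ x ∈ s, f x ≤ c) :
    ∀ x ∈ closure s, f x ≤ c := by
  intro x hx
  haveI hne : (nhdsWithin x s).NeBot := mem_closure_iff_nhdsWithin_neBot.mp hx
  have htend : Filter.Tendsto f (nhdsWithin x s) (nhds (f x)) :=
    (hf x hx).mono_left (nhdsWithin_mono x subset_closure)
  exact le_of_tendsto htend (Filter.eventually_of_mem self_mem_nhdsWithin h)

lemma cont_sSup_slice {E' : Type*} [PseudoMetricSpace E'] {a : ℝ} {C : Set E'}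
    (hC : IsCompact C) (hCne : C.Nonempty) {h : ℝ → E' → ℝ}
    (hcont : ContinuousOn (fun p : ℝ × E' => h p.1 p.2) (Set.Ici a ×ˢ C))
    (h0 : ∀ t ∈ Set.Ici a, ∀ p ∈ C, 0 ≤ h t p) :
    ContinuousOn (fun t => sSup (h t '' C)) (Set.Ici a) := by
  have hslice : ∀ t ∈ Set.Ici a, ContinuousOn (h t) C := by
    intro t ht
    have : ContinuousOn ((fun p : ℝ × E' => h p.1 p.2) ∘ (fun p : E' => (t, p))) C :=
      hcont.comp (Continuous.continuousOn (by fun_prop)) (fun p hp => ⟨ht, hp⟩)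
    exact this
  have hbdd : ∀ t ∈ Set.Ici a, BddAbove (h t '' C) := fun t ht =>
    (hC.image_of_continuousOn (hslice t ht)).bddAbove
  have hnn : ∀ t ∈ Set.Ici a, 0 ≤ sSup (h t '' C) := by
    intro t ht
    obtain ⟨p, hp⟩ := hCne
    exact le_trans (h0 t ht p hp) (le_csSup (hbdd t ht) ⟨p, hp, rfl⟩)
  intro t₀ ht₀
  rw [Metric.continuousWithinAt_iff]
  intro ε hε
  have hJC : IsCompact ((Set.Icc a (t₀ + 1)) ×ˢ C) := (isCompact_Icc).prod hC
  have hsub : ((Set.Icc a (t₀ + 1)) ×ˢ C) ⊆ Set.Ici a ×ˢ C :=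
    Set.prod_mono (fun x hx => hx.1) le_rfl
  have huc := hJC.uniformContinuousOn_of_continuous (hcont.mono hsub)
  rw [Metric.uniformContinuousOn_iff] at huc
  obtain ⟨δ, hδ, hδ'⟩ := huc (ε/2) (by linarith)
  refine ⟨min δ 1, by positivity, fun {t} ht hdist => ?_⟩
  have habs : |t - t₀| < min δ 1 := by rwa [Real.dist_eq] at hdist
  have habs1 := lt_of_lt_of_le habs (min_le_right _ _)
  have habsδ := lt_of_lt_of_le habs (min_le_left _ _)
  have htJ : t ∈ Set.Icc a (t₀ + 1) := ⟨ht, by have := (abs_lt.mp habs1).2; linarith⟩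
  have ht₀J : t₀ ∈ Set.Icc a (t₀ + 1) := ⟨ht₀, by linarith⟩
  have key : ∀ p ∈ C, |h t p - h t₀ p| < ε/2 := by
    intro p hp
    have hd : dist ((t, p) : ℝ × E') (t₀, p) < δ := by
      rw [Prod.dist_eq]
      simp only [dist_self]
      exact max_lt (by rwa [Real.dist_eq]) hδ
    have := hδ' (t, p) ⟨htJ, hp⟩ (t₀, p) ⟨ht₀J, hp⟩ hd
    rwa [Real.dist_eq] at this
  have hle1 : sSup (h t '' C) ≤ sSup (h t₀ '' C) + ε/2 := by
    apply Real.sSup_le _ (by linarith [hnn t₀ ht₀])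
    rintro r ⟨p, hp, rfl⟩
    have h1 := (abs_lt.mp (key p hp)).2
    have h2 : h t₀ p ≤ sSup (h t₀ '' C) := le_csSup (hbdd t₀ ht₀) ⟨p, hp, rfl⟩
    linarith
  have hle2 : sSup (h t₀ '' C) ≤ sSup (h t '' C) + ε/2 := by
    apply Real.sSup_le _ (by linarith [hnn t ht])
    rintro r ⟨p, hp, rfl⟩
    have h1 := (abs_lt.mp (key p hp)).1
    have h2 : h t p ≤ sSup (h t '' C) := le_csSup (hbdd t ht) ⟨p, hp, rfl⟩
    linarith
  rw [Real.dist_eq, abs_lt]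
  constructor <;> linarith

lemma diam_set_eq {d : ℕ} (Ω₀ : Set (Euc d)) (f : Euc d → Euc d) :
    {r : ℝ | ∃ x ∈ closure Ω₀, ∃ y ∈ closure Ω₀, r = ‖f x - f y‖} =
      (fun p : Euc d × Euc d => ‖f p.1 - f p.2‖) '' (closure Ω₀ ×ˢ closure Ω₀) := by
  ext r
  constructor
  · rintro ⟨x, hx, y, hy, rfl⟩; exact ⟨(x, y), ⟨hx, hy⟩, rfl⟩
  · rintro ⟨⟨x, y⟩, ⟨hx, hy⟩, rfl⟩; exact ⟨x, hx, y, hy, rfl⟩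

end AuxLemmas

set_option maxHeartbeats 2000000

/-- **Differential inequalities for the auxiliary quantities (Lemma 4.2).**
With `d_X(t) = diamF d Ω₀ (η t)`, `d_V(t) = diamF d Ω₀ (v t)`,
`R_V = velBound d τ Ω₀ v`, and `X`, `V` defined by
`X(t) = d_X(0) + ∫₀ᵗ d_V(s) ds`,
`V(t) = d_V(0) e^{-t} + ∫₀ᵗ [1 - ψt(X(s-τ) + R_V τ)] d_V(s-τ) e^{s-t} ds` for `t ≥ 0`
and `X = d_X`, `V = d_V` on `[-τ,0]`, one has for all `t > 0`:
(i) `X'(t) = d_V(t)`; (ii) `V'(t) ≤ -V(t) + [1 - ψt(X(t-τ) + R_V τ)] V(t-τ)`;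
and (iii) `d_V(t) ≤ V(t)` for all `t ≥ -τ`. -/
theorem stmt_4 {d : ℕ} (τ : ℝ) (hτ : 0 < τ)
    (Ω₀ : Set (Euc d)) (hΩo : IsOpen Ω₀) (hΩne : Ω₀.Nonempty)
    (hΩb : Bornology.IsBounded Ω₀)
    (ρ₀ : Euc d → ℝ) (hρ : GoodDensity d Ω₀ ρ₀)
    (ψ : Euc d → ℝ) (ψt : ℝ → ℝ) (hψ : GoodInfluence d ψ ψt)
    (η v : ℝ → Euc d → Euc d)
    (hsol : IsCSSol d τ Ω₀ ρ₀ ψ η v)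
    (hη_cont : ContinuousOn (fun p : ℝ × Euc d => η p.1 p.2)
      (Set.Ici (-τ) ×ˢ closure Ω₀))
    (hv_cont : ContinuousOn (fun p : ℝ × Euc d => v p.1 p.2)
      (Set.Ici (-τ) ×ˢ closure Ω₀))
    (hRV_fin : BddAbove {r : ℝ | ∃ s ∈ Set.Icc (-τ) 0, ∃ x ∈ closure Ω₀, r = ‖v s x‖})
    (X V : ℝ → ℝ)
    (hX_init : ∀ t ∈ Set.Icc (-τ) 0, X t = diamF d Ω₀ (η t))
    (hV_init : ∀ t ∈ Set.Icc (-τ) 0, V t = diamF d Ω₀ (v t))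
    (hX_def : ∀ t, 0 ≤ t →
      X t = diamF d Ω₀ (η 0) + ∫ s in (0 : ℝ)..t, diamF d Ω₀ (v s))
    (hV_def : ∀ t, 0 ≤ t →
      V t = diamF d Ω₀ (v 0) * Real.exp (-t) +
        ∫ s in (0 : ℝ)..t,
          (1 - ψt (X (s - τ) + velBound d τ Ω₀ v * τ)) * diamF d Ω₀ (v (s - τ)) *
            Real.exp (s - t)) :
    (∀ t, 0 < t → HasDerivAt X (diamF d Ω₀ (v t)) t) ∧
    (∀ t, 0 < t → ∃ V' : ℝ, HasDerivAt V V' t ∧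
      V' ≤ -V t + (1 - ψt (X (t - τ) + velBound d τ Ω₀ v * τ)) * V (t - τ)) ∧
    (∀ t, -τ ≤ t → diamF d Ω₀ (v t) ≤ V t) := by
  classical
  obtain ⟨hη0, hηd, hvd⟩ := hsol
  obtain ⟨hψ_eq, hψ_pos, hψ_anti, hψ01, Kψ, hψ_lip⟩ := hψ
  obtain ⟨hρ_meas, hρ_nn, hρ_supp, hρ_int, hρ_one⟩ := hρ
  set M := velBound d τ Ω₀ v with hM_def
  have hτle : -τ ≤ (0:ℝ) := by linarith
  have hKcomp : IsCompact (closure Ω₀) :=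
    Metric.isCompact_of_isClosed_isBounded isClosed_closure hΩb.closure
  have hKne : (closure Ω₀).Nonempty := hΩne.closure
  have hsubK : Ω₀ ⊆ closure Ω₀ := subset_closure
  have hmesΩ : MeasurableSet Ω₀ := hΩo.measurableSet
  rcases Nat.eq_zero_or_pos d with hd0 | hdpos
  · -- trivial case d = 0
    subst hd0
    have hdiam0 : ∀ f : Euc 0 → Euc 0, diamF 0 Ω₀ f = 0 := by
      intro f
      have hset : {r : ℝ | ∃ x ∈ closure Ω₀, ∃ y ∈ closure Ω₀, r = ‖f x - f y‖} = {0} := by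
        ext r
        simp only [Set.mem_setOf_eq, Set.mem_singleton_iff]
        constructor
        · rintro ⟨x, hx, y, hy, rfl⟩
          rw [Subsingleton.elim (f x) (f y)]; simp
        · rintro rfl
          obtain ⟨x₀, hx₀⟩ := hKne
          exact ⟨x₀, hx₀, x₀, hx₀, by simp⟩
      show sSup {r : ℝ | ∃ x ∈ closure Ω₀, ∃ y ∈ closure Ω₀, r = ‖f x - f y‖} = 0
      rw [hset, csSup_singleton]
    have hX0 : ∀ u : ℝ, 0 ≤ u → X u = 0 := by
      intro u hu
      rw [hX_def u hu, hdiam0]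
      simp only [hdiam0]
      simp
    have hV0 : ∀ u : ℝ, -τ ≤ u → V u = 0 := by
      intro u hu
      rcases le_or_gt u 0 with h | h
      · rw [hV_init u ⟨hu, h⟩, hdiam0]
      · rw [hV_def u h.le]
        simp only [hdiam0]
        simp
    refine ⟨?_, ?_, ?_⟩
    · intro t ht
      have h1 : X =ᶠ[nhds t] (fun _ => (0:ℝ)) := by
        filter_upwards [Ioi_mem_nhds ht] with u hu using hX0 u (le_of_lt hu)
      rw [hdiam0]
      exact (hasDerivAt_const t (0:ℝ)).congr_of_eventuallyEq h1
    · intro t ht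
      refine ⟨0, ?_, ?_⟩
      · have h1 : V =ᶠ[nhds t] (fun _ => (0:ℝ)) := by
          filter_upwards [Ioi_mem_nhds ht] with u hu using hV0 u (by have := Set.mem_Ioi.mp hu; linarith)
        exact (hasDerivAt_const t (0:ℝ)).congr_of_eventuallyEq h1
      · rw [hV0 t (by linarith), hV0 (t - τ) (by linarith)]
        simp
    · intro t ht
      rw [hdiam0, hV0 t ht]
  -- main case d ≥ 1
  have hψ_pos' : ∀ z : Euc d, 0 < ψ z := fun z => by
    rw [hψ_eq]; exact hψ_pos _ (norm_nonneg z)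
  have hψ_le_one : ∀ z : Euc d, ψ z ≤ 1 := fun z => by
    rw [hψ_eq, ← hψ01]
    exact hψ_anti (Set.mem_Ici.mpr le_rfl) (Set.mem_Ici.mpr (norm_nonneg z)) (norm_nonneg z)
  have hv_sliceK : ∀ t, -τ ≤ t → ContinuousOn (fun x => v t x) (closure Ω₀) := by
    intro t ht
    have h : ContinuousOn ((fun p : ℝ × Euc d => v p.1 p.2) ∘ (fun x : Euc d => (t, x)))
        (closure Ω₀) :=
      hv_cont.comp (Continuous.continuousOn (by fun_prop)) (fun x hx => ⟨ht, hx⟩)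
    exact h
  have hη_sliceK : ∀ t, -τ ≤ t → ContinuousOn (fun x => η t x) (closure Ω₀) := by
    intro t ht
    have h : ContinuousOn ((fun p : ℝ × Euc d => η p.1 p.2) ∘ (fun x : Euc d => (t, x)))
        (closure Ω₀) :=
      hη_cont.comp (Continuous.continuousOn (by fun_prop)) (fun x hx => ⟨ht, hx⟩)
    exact h
  have hv_time : ∀ x ∈ closure Ω₀, ContinuousOn (fun s => v s x) (Set.Ici (-τ)) := by
    intro x hx
    have h : ContinuousOn ((fun p : ℝ × Euc d => v p.1 p.2) ∘ (fun s : ℝ => (s, x)))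
        (Set.Ici (-τ)) :=
      hv_cont.comp (Continuous.continuousOn (by fun_prop)) (fun s hs => ⟨hs, hx⟩)
    exact h
  have hη_time : ∀ x ∈ closure Ω₀, ContinuousOn (fun s => η s x) (Set.Ici (-τ)) := by
    intro x hx
    have h : ContinuousOn ((fun p : ℝ × Euc d => η p.1 p.2) ∘ (fun s : ℝ => (s, x)))
        (Set.Ici (-τ)) :=
      hη_cont.comp (Continuous.continuousOn (by fun_prop)) (fun s hs => ⟨hs, hx⟩)
    exact h
  have hdiamF_eq : ∀ f : Euc d → Euc d, diamF d Ω₀ f =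
      sSup {r : ℝ | ∃ x ∈ closure Ω₀, ∃ y ∈ closure Ω₀, r = ‖f x - f y‖} := fun _ => rfl
  have hdiam_le : ∀ f : Euc d → Euc d, ContinuousOn f (closure Ω₀) →
      (∀ x ∈ closure Ω₀, ∀ y ∈ closure Ω₀, ‖f x - f y‖ ≤ diamF d Ω₀ f) ∧ 0 ≤ diamF d Ω₀ f := by
    intro f hf
    have hjc : ContinuousOn (fun p : Euc d × Euc d => ‖f p.1 - f p.2‖)
        (closure Ω₀ ×ˢ closure Ω₀) :=
      ((hf.comp continuous_fst.continuousOn (fun p hp => hp.1)).sub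
        (hf.comp continuous_snd.continuousOn (fun p hp => hp.2))).norm
    have hbdd : BddAbove {r : ℝ | ∃ x ∈ closure Ω₀, ∃ y ∈ closure Ω₀, r = ‖f x - f y‖} := by
      rw [diam_set_eq]
      exact ((hKcomp.prod hKcomp).image_of_continuousOn hjc).bddAbove
    obtain ⟨x₀, hx₀⟩ := hKne
    constructor
    · intro x hx y hy
      rw [hdiamF_eq]
      exact le_csSup hbdd ⟨x, hx, y, hy, rfl⟩
    · rw [hdiamF_eq]
      exact le_csSup hbdd ⟨x₀, hx₀, x₀, hx₀, by simp⟩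
  have hdiam_cont : ∀ w : ℝ → Euc d → Euc d,
      ContinuousOn (fun p : ℝ × Euc d => w p.1 p.2) (Set.Ici (-τ) ×ˢ closure Ω₀) →
      ContinuousOn (fun t => diamF d Ω₀ (w t)) (Set.Ici (-τ)) := by
    intro w hw
    have hj1 : ContinuousOn (fun p : ℝ × (Euc d × Euc d) => w p.1 p.2.1)
        (Set.Ici (-τ) ×ˢ (closure Ω₀ ×ˢ closure Ω₀)) :=
      hw.comp (f := fun p : ℝ × (Euc d × Euc d) => (p.1, p.2.1))
        (Continuous.continuousOn (by fun_prop)) (fun p hp => ⟨hp.1, hp.2.1⟩)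
    have hj2 : ContinuousOn (fun p : ℝ × (Euc d × Euc d) => w p.1 p.2.2)
        (Set.Ici (-τ) ×ˢ (closure Ω₀ ×ˢ closure Ω₀)) :=
      hw.comp (f := fun p : ℝ × (Euc d × Euc d) => (p.1, p.2.2))
        (Continuous.continuousOn (by fun_prop)) (fun p hp => ⟨hp.1, hp.2.2⟩)
    have hjoint : ContinuousOn (fun p : ℝ × (Euc d × Euc d) => ‖w p.1 p.2.1 - w p.1 p.2.2‖)
        (Set.Ici (-τ) ×ˢ (closure Ω₀ ×ˢ closure Ω₀)) := (hj1.sub hj2).norm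
    have h := cont_sSup_slice (h := fun t p => ‖w t p.1 - w t p.2‖) (hKcomp.prod hKcomp) (hKne.prod hKne) hjoint
      (fun t _ p _ => norm_nonneg _)
    apply h.congr
    intro t _
    show diamF d Ω₀ (w t) = _
    rw [hdiamF_eq, diam_set_eq]
  have hdV_cont : ContinuousOn (fun t => diamF d Ω₀ (v t)) (Set.Ici (-τ)) :=
    hdiam_cont v hv_cont
  have hdX_cont : ContinuousOn (fun t => diamF d Ω₀ (η t)) (Set.Ici (-τ)) :=
    hdiam_cont η hη_cont
  -- continuous extensions
  set dVe : ℝ → ℝ := fun r => diamF d Ω₀ (v (max r (-τ))) with hdVe_def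
  have hdVe_cont : Continuous dVe := by
    have h := hdV_cont.comp_continuous (f := fun r : ℝ => max r (-τ))
      (continuous_id.max continuous_const) (fun r => Set.mem_Ici.mpr (le_max_right _ _))
    exact h
  have hdVe_eq : ∀ r, -τ ≤ r → dVe r = diamF d Ω₀ (v r) := by
    intro r hr
    simp only [hdVe_def, max_eq_left hr]
  set dXe : ℝ → ℝ := fun r => diamF d Ω₀ (η (max r (-τ))) with hdXe_def
  have hdXe_cont : Continuous dXe := by
    have h := hdX_cont.comp_continuous (f := fun r : ℝ => max r (-τ))
      (continuous_id.max continuous_const) (fun r => Set.mem_Ici.mpr (le_max_right _ _))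
    exact h
  have hdXe_eq : ∀ r, -τ ≤ r → dXe r = diamF d Ω₀ (η r) := by
    intro r hr
    simp only [hdXe_def, max_eq_left hr]
  -- M facts
  have hM_le : ∀ s ∈ Set.Icc (-τ) (0:ℝ), ∀ x ∈ closure Ω₀, ‖v s x‖ ≤ M := by
    intro s hs x hx
    rw [hM_def]
    exact le_csSup hRV_fin ⟨s, hs, x, hx, rfl⟩
  have hM_nonneg : 0 ≤ M := by
    obtain ⟨x₀, hx₀⟩ := hKne
    exact le_trans (norm_nonneg _) (hM_le 0 ⟨hτle, le_rfl⟩ x₀ hx₀)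
  -- den / num / F
  set den : ℝ → Euc d → ℝ := fun s x => ∫ y in Ω₀, ψ (η s x - η (s - τ) y) * ρ₀ y
    with hden_def
  set num : ℝ → Euc d → Euc d := fun s x =>
    ∫ y in Ω₀, (ψ (η s x - η (s - τ) y) * ρ₀ y) • v (s - τ) y with hnum_def
  set F : ℝ → Euc d → Euc d := fun s x => (den s x)⁻¹ • num s x with hF_def
  have hvd' : ∀ x ∈ Ω₀, ∀ t : ℝ, 0 < t →
      HasDerivAt (fun s => v s x) (F t x - v t x) t := fun x hx t ht => hvd x hx t ht
  -- continuity of weights in y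
  have hw_cont : ∀ s, 0 ≤ s → ∀ x ∈ closure Ω₀,
      ContinuousOn (fun y => ψ (η s x - η (s - τ) y)) (closure Ω₀) := by
    intro s hs x _
    exact hψ_lip.continuous.comp_continuousOn
      (continuousOn_const.sub (hη_sliceK (s - τ) (by linarith)))
  have haesm_w : ∀ s, 0 ≤ s → ∀ x ∈ closure Ω₀,
      AEStronglyMeasurable (fun y => ψ (η s x - η (s - τ) y) * ρ₀ y)
        (volume.restrict Ω₀) := by
    intro s hs x hx
    exact (((hw_cont s hs x hx).mono hsubK).aestronglyMeasurable hmesΩ).mul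
      hρ_meas.aestronglyMeasurable
  have hden_int : ∀ s, 0 ≤ s → ∀ x ∈ closure Ω₀,
      Integrable (fun y => ψ (η s x - η (s - τ) y) * ρ₀ y) (volume.restrict Ω₀) := by
    intro s hs x hx
    apply hρ_int.bdd_mul (c := 1) (((hw_cont s hs x hx).mono hsubK).aestronglyMeasurable hmesΩ)
    refine Filter.Eventually.of_forall (fun y => ?_)
    rw [Real.norm_eq_abs, abs_of_nonneg (hψ_pos' _).le]
    exact hψ_le_one _
  have hvbound : ∀ s, -τ ≤ s → ∃ C : ℝ, 0 ≤ C ∧ ∀ y ∈ closure Ω₀, ‖v s y‖ ≤ C := by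
    intro s hs
    obtain ⟨C, hC⟩ := (hKcomp.image_of_continuousOn ((hv_sliceK s hs).norm)).bddAbove
    exact ⟨max C 0, le_max_right _ _, fun y hy =>
      le_trans (hC ⟨y, hy, rfl⟩) (le_max_left _ _)⟩
  have hvboundT : ∀ T : ℝ, ∃ C : ℝ, 0 ≤ C ∧
      ∀ r ∈ Set.Icc (-τ) T, ∀ y ∈ closure Ω₀, ‖v r y‖ ≤ C := by
    intro T
    rcases lt_or_ge T (-τ) with hT | hT
    · exact ⟨0, le_rfl, fun r hr y hy => absurd (hr.1.trans hr.2) (by simp; linarith)⟩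
    · have hcomp : IsCompact ((Set.Icc (-τ) T) ×ˢ closure Ω₀) := isCompact_Icc.prod hKcomp
      have hcont : ContinuousOn (fun p : ℝ × Euc d => ‖v p.1 p.2‖)
          ((Set.Icc (-τ) T) ×ˢ closure Ω₀) :=
        (hv_cont.mono (Set.prod_mono (fun r hr => hr.1) subset_rfl)).norm
      obtain ⟨C, hC⟩ := (hcomp.image_of_continuousOn hcont).bddAbove
      exact ⟨max C 0, le_max_right _ _, fun r hr y hy =>
        le_trans (hC ⟨(r, y), ⟨hr, hy⟩, rfl⟩) (le_max_left _ _)⟩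
  have haesm_num : ∀ s, 0 ≤ s → ∀ x ∈ closure Ω₀,
      AEStronglyMeasurable (fun y => (ψ (η s x - η (s - τ) y) * ρ₀ y) • v (s - τ) y)
        (volume.restrict Ω₀) := by
    intro s hs x hx
    exact (haesm_w s hs x hx).smul
      (((hv_sliceK (s - τ) (by linarith)).mono hsubK).aestronglyMeasurable hmesΩ)
  have hnum_int : ∀ s, 0 ≤ s → ∀ x ∈ closure Ω₀,
      Integrable (fun y => (ψ (η s x - η (s - τ) y) * ρ₀ y) • v (s - τ) y)
        (volume.restrict Ω₀) := by
    intro s hs x hx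
    obtain ⟨C, hC0, hC⟩ := hvbound (s - τ) (by linarith)
    apply Integrable.mono' (hρ_int.mul_const C) (haesm_num s hs x hx)
    filter_upwards [MeasureTheory.ae_restrict_mem hmesΩ] with y hy
    rw [norm_smul, Real.norm_eq_abs,
      abs_of_nonneg (mul_nonneg (hψ_pos' _).le (hρ_nn y))]
    calc ψ (η s x - η (s - τ) y) * ρ₀ y * ‖v (s - τ) y‖
        ≤ ρ₀ y * ‖v (s - τ) y‖ :=
          mul_le_mul_of_nonneg_right
            (mul_le_of_le_one_left (hρ_nn y) (hψ_le_one _)) (norm_nonneg _)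
      _ ≤ ρ₀ y * C := mul_le_mul_of_nonneg_left (hC y (hsubK hy)) (hρ_nn y)
  have hden_le_one : ∀ s, 0 ≤ s → ∀ x ∈ closure Ω₀, den s x ≤ 1 := by
    intro s hs x hx
    have h := MeasureTheory.setIntegral_mono_on (hden_int s hs x hx) hρ_int hmesΩ
      (fun y _ => mul_le_of_le_one_left (hρ_nn y) (hψ_le_one _))
    rw [hρ_one] at h
    exact h
  have hden_pos : ∀ s, 0 ≤ s → ∀ x ∈ closure Ω₀, 0 < den s x := by
    intro s hs x hx
    obtain ⟨y₀, hy₀, hmin⟩ := hKcomp.exists_isMinOn hKne (hw_cont s hs x hx)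
    have hc : 0 < ψ (η s x - η (s - τ) y₀) := hψ_pos' _
    have h1 : ∫ y in Ω₀, ψ (η s x - η (s - τ) y₀) * ρ₀ y =
        ψ (η s x - η (s - τ) y₀) := by
      rw [integral_const_mul, hρ_one, mul_one]
    have h2 : ∫ y in Ω₀, ψ (η s x - η (s - τ) y₀) * ρ₀ y ≤ den s x := by
      apply MeasureTheory.setIntegral_mono_on (hρ_int.const_mul _)
        (hden_int s hs x hx) hmesΩ
      intro y hy
      exact mul_le_mul_of_nonneg_right (hmin (hsubK hy)) (hρ_nn y)
    rw [h1] at h2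
    linarith
  -- C1 : average norm bound
  have hF_norm_le : ∀ s, 0 ≤ s → ∀ x ∈ closure Ω₀, ∀ C : ℝ, 0 ≤ C →
      (∀ y ∈ closure Ω₀, ‖v (s - τ) y‖ ≤ C) → ‖F s x‖ ≤ C := by
    intro s hs x hx C hC0 hC
    have hdp := hden_pos s hs x hx
    have h1 : ‖num s x‖ ≤ den s x * C := by
      calc ‖num s x‖ ≤ ∫ y in Ω₀, ‖(ψ (η s x - η (s - τ) y) * ρ₀ y) • v (s - τ) y‖ :=
            MeasureTheory.norm_integral_le_integral_norm _
        _ ≤ ∫ y in Ω₀, (ψ (η s x - η (s - τ) y) * ρ₀ y) * C := by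
            apply MeasureTheory.setIntegral_mono_on ((hnum_int s hs x hx).norm)
              ((hden_int s hs x hx).mul_const C) hmesΩ
            intro y hy
            rw [norm_smul, Real.norm_eq_abs,
              abs_of_nonneg (mul_nonneg (hψ_pos' _).le (hρ_nn y))]
            exact mul_le_mul_of_nonneg_left (hC y (hsubK hy))
              (mul_nonneg (hψ_pos' _).le (hρ_nn y))
        _ = den s x * C := by
            simp only [hden_def]
            simpa [smul_eq_mul] using
              integral_smul_const (μ := volume.restrict Ω₀)
                (fun y => ψ (η s x - η (s - τ) y) * ρ₀ y) C
    have h2 : ‖F s x‖ = (den s x)⁻¹ * ‖num s x‖ := by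
      simp only [hF_def]
      rw [norm_smul, Real.norm_eq_abs, abs_of_pos (inv_pos.mpr hdp)]
    rw [h2]
    calc (den s x)⁻¹ * ‖num s x‖ ≤ (den s x)⁻¹ * (den s x * C) := by
          exact mul_le_mul_of_nonneg_left h1 (by positivity)
      _ = C := by field_simp
  -- continuity of F in time
  have hsubτ_cont : ∀ g : ℝ → Euc d, ContinuousOn g (Set.Ici (-τ)) →
      ∀ T : ℝ, ContinuousOn (fun s : ℝ => g (s - τ)) (Set.Icc 0 T) := by
    intro g hg T
    have hf : Continuous (fun s : ℝ => s - τ) := by fun_prop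
    exact hg.comp hf.continuousOn
      (fun s hs => by simp only [Set.mem_Ici]; linarith [hs.1])
  have hnum_cont : ∀ x ∈ closure Ω₀, ∀ T, 0 ≤ T →
      ContinuousOn (fun s => num s x) (Set.Icc 0 T) := by
    intro x hx T hT
    obtain ⟨C, hC0, hC⟩ := hvboundT T
    apply MeasureTheory.continuousOn_of_dominated (bound := fun y => ρ₀ y * C)
    · intro s hs
      exact haesm_num s hs.1 x hx
    · intro s hs
      filter_upwards [MeasureTheory.ae_restrict_mem hmesΩ] with y hy
      rw [norm_smul, Real.norm_eq_abs,
        abs_of_nonneg (mul_nonneg (hψ_pos' _).le (hρ_nn y))]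
      calc ψ (η s x - η (s - τ) y) * ρ₀ y * ‖v (s - τ) y‖
          ≤ ρ₀ y * ‖v (s - τ) y‖ :=
            mul_le_mul_of_nonneg_right
              (mul_le_of_le_one_left (hρ_nn y) (hψ_le_one _)) (norm_nonneg _)
        _ ≤ ρ₀ y * C := mul_le_mul_of_nonneg_left
            (hC (s - τ) ⟨by linarith [hs.1], by linarith [hs.2]⟩ y (hsubK hy)) (hρ_nn y)
    · exact hρ_int.mul_const C
    · filter_upwards [MeasureTheory.ae_restrict_mem hmesΩ] with y hy
      have hc1 : ContinuousOn (fun s : ℝ => η s x) (Set.Icc 0 T) :=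
        (hη_time x hx).mono (fun s hs => by simp only [Set.mem_Ici]; linarith [hs.1])
      have hc2 : ContinuousOn (fun s : ℝ => η (s - τ) y) (Set.Icc 0 T) :=
        hsubτ_cont (fun r => η r y) (hη_time y (hsubK hy)) T
      have hc3 : ContinuousOn (fun s : ℝ => v (s - τ) y) (Set.Icc 0 T) :=
        hsubτ_cont (fun r => v r y) (hv_time y (hsubK hy)) T
      exact ((hψ_lip.continuous.comp_continuousOn (hc1.sub hc2)).mul
        continuousOn_const).smul hc3
  have hden_cont : ∀ x ∈ closure Ω₀, ∀ T, 0 ≤ T →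
      ContinuousOn (fun s => den s x) (Set.Icc 0 T) := by
    intro x hx T hT
    apply MeasureTheory.continuousOn_of_dominated (bound := ρ₀)
    · intro s hs
      exact haesm_w s hs.1 x hx
    · intro s hs
      filter_upwards [MeasureTheory.ae_restrict_mem hmesΩ] with y hy
      rw [Real.norm_eq_abs, abs_of_nonneg (mul_nonneg (hψ_pos' _).le (hρ_nn y))]
      exact mul_le_of_le_one_left (hρ_nn y) (hψ_le_one _)
    · exact hρ_int
    · filter_upwards [MeasureTheory.ae_restrict_mem hmesΩ] with y hy
      have hc1 : ContinuousOn (fun s : ℝ => η s x) (Set.Icc 0 T) :=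
        (hη_time x hx).mono (fun s hs => by simp only [Set.mem_Ici]; linarith [hs.1])
      have hc2 : ContinuousOn (fun s : ℝ => η (s - τ) y) (Set.Icc 0 T) :=
        hsubτ_cont (fun r => η r y) (hη_time y (hsubK hy)) T
      exact (hψ_lip.continuous.comp_continuousOn (hc1.sub hc2)).mul continuousOn_const
  have hF_cont : ∀ x ∈ closure Ω₀, ∀ T, 0 ≤ T →
      ContinuousOn (fun s => F s x) (Set.Icc 0 T) := by
    intro x hx T hT
    exact ((hden_cont x hx T hT).inv₀
      (fun s hs => (hden_pos s hs.1 x hx).ne')).smul (hnum_cont x hx T hT)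
  have hF_ii : ∀ x ∈ closure Ω₀, ∀ t, 0 ≤ t →
      IntervalIntegrable (fun s => Real.exp s • F s x) volume 0 t := by
    intro x hx t ht
    have h1 : ContinuousOn (fun s => Real.exp s • F s x) (Set.Icc 0 t) :=
      continuous_exp.continuousOn.smul (hF_cont x hx t ht)
    exact ContinuousOn.intervalIntegrable (by rw [Set.uIcc_of_le ht]; exact h1)
  -- Duhamel formula
  have hDuh : ∀ x ∈ Ω₀, ∀ t : ℝ, 0 < t →
      (∫ s in (0:ℝ)..t, Real.exp s • F s x) = Real.exp t • v t x - v 0 x := by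
    intro x hx t ht
    have h := intervalIntegral.integral_eq_sub_of_hasDeriv_right_of_le ht.le
      (f := fun s => Real.exp s • v s x) (f' := fun s => Real.exp s • F s x)
      ?_ ?_ (hF_ii x (hsubK hx) t ht.le)
    · simpa using h
    · exact continuous_exp.continuousOn.smul
        ((hv_time x (hsubK hx)).mono (fun s hs => by
          simp only [Set.mem_Ici]; linarith [hs.1]))
    · intro s hs
      have hder := (Real.hasDerivAt_exp s).smul (hvd' x hx s hs.1)
      have he : Real.exp s • (F s x - v s x) + Real.exp s • v s x = Real.exp s • F s x := by
        rw [smul_sub]; abel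
      rw [he] at hder
      exact hder.hasDerivWithinAt
  -- extension of bounds from Ω₀ to its closure
  have hvK_le : ∀ t, -τ ≤ t → ∀ C : ℝ,
      (∀ x ∈ Ω₀, ‖v t x‖ ≤ C) → ∀ x ∈ closure Ω₀, ‖v t x‖ ≤ C := by
    intro t ht C h
    exact le_on_closure' ((hv_sliceK t ht).norm) h
  -- global velocity bound
  have hA : ∀ n : ℕ, ∀ t, -τ ≤ t → t ≤ n * τ → ∀ x ∈ closure Ω₀, ‖v t x‖ ≤ M := by
    intro n
    induction n with
    | zero =>
      intro t ht ht' x hx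
      exact hM_le t ⟨ht, by simpa using ht'⟩ x hx
    | succ n ih =>
      intro t ht ht' x hx
      rcases le_or_gt t (n * τ) with h | h
      · exact ih t ht h x hx
      · have ht0 : 0 < t := lt_of_le_of_lt (by positivity) h
        refine hvK_le t ht M (fun x' hx' => ?_) x hx
        have hd := hDuh x' hx' t ht0
        push_cast at ht'
        have hFb : ∀ s ∈ Set.Icc (0:ℝ) t, ‖Real.exp s • F s x'‖ ≤ Real.exp s * M := by
          intro s hs
          rw [norm_smul, Real.norm_eq_abs, abs_of_pos (Real.exp_pos s)]
          apply mul_le_mul_of_nonneg_left _ (Real.exp_pos s).le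
          apply hF_norm_le s hs.1 x' (hsubK hx') M hM_nonneg
          intro y hy
          exact ih (s - τ) (by linarith [hs.1]) (by nlinarith [hs.2]) y hy
        have h1 : ‖∫ s in (0:ℝ)..t, Real.exp s • F s x'‖ ≤ (Real.exp t - 1) * M := by
          calc ‖∫ s in (0:ℝ)..t, Real.exp s • F s x'‖
              ≤ ∫ s in (0:ℝ)..t, ‖Real.exp s • F s x'‖ :=
                intervalIntegral.norm_integral_le_integral_norm ht0.le
            _ ≤ ∫ s in (0:ℝ)..t, Real.exp s * M := by
                apply intervalIntegral.integral_mono_on ht0.le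
                  ((hF_ii x' (hsubK hx') t ht0.le).norm)
                  ((continuous_exp.mul continuous_const).intervalIntegrable 0 t) hFb
            _ = (Real.exp t - 1) * M := by
                rw [intervalIntegral.integral_mul_const, integral_exp, Real.exp_zero]
        have h2 : Real.exp t * ‖v t x'‖ ≤ ‖v 0 x'‖ + (Real.exp t - 1) * M := by
          have he : Real.exp t • v t x' = (∫ s in (0:ℝ)..t, Real.exp s • F s x') + v 0 x' :=
            (sub_eq_iff_eq_add.mp hd.symm)
          calc Real.exp t * ‖v t x'‖ = ‖Real.exp t • v t x'‖ := by
                rw [norm_smul, Real.norm_eq_abs, abs_of_pos (Real.exp_pos t)]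
            _ = ‖(∫ s in (0:ℝ)..t, Real.exp s • F s x') + v 0 x'‖ := by rw [he]
            _ ≤ ‖∫ s in (0:ℝ)..t, Real.exp s • F s x'‖ + ‖v 0 x'‖ := norm_add_le _ _
            _ ≤ ‖v 0 x'‖ + (Real.exp t - 1) * M := by linarith
        have h3 : ‖v 0 x'‖ ≤ M := hM_le 0 ⟨hτle, le_rfl⟩ x' (hsubK hx')
        have h4 : Real.exp t * ‖v t x'‖ ≤ Real.exp t * M := by nlinarith
        exact le_of_mul_le_mul_left h4 (Real.exp_pos t)
  have hA' : ∀ t, -τ ≤ t → ∀ x ∈ closure Ω₀, ‖v t x‖ ≤ M := by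
    intro t ht
    obtain ⟨n, hn⟩ := exists_nat_ge (t / τ)
    exact hA n t ht ((div_le_iff₀ hτ).mp hn)
  -- FTC for η
  have hηFTC : ∀ x ∈ closure Ω₀, ∀ a b : ℝ, -τ ≤ a → a ≤ b →
      (∫ s in a..b, v s x) = η b x - η a x := by
    intro x hx a b ha hab
    apply intervalIntegral.integral_eq_sub_of_hasDeriv_right_of_le hab
    · exact (hη_time x hx).mono (fun s hs => by
        simp only [Set.mem_Ici]; linarith [hs.1])
    · intro s hs
      exact ((hηd x hx s (by linarith [hs.1])).hasDerivAt
        (Ici_mem_nhds (by linarith [hs.1]))).hasDerivWithinAt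
    · apply ContinuousOn.intervalIntegrable
      rw [Set.uIcc_of_le hab]
      exact (hv_time x hx).mono (fun s hs => by
        simp only [Set.mem_Ici]; linarith [hs.1])
  have hdisp : ∀ x ∈ closure Ω₀, ∀ s : ℝ, 0 ≤ s → ‖η s x - η (s - τ) x‖ ≤ M * τ := by
    intro x hx s hs
    rw [← hηFTC x hx (s - τ) s (by linarith) (by linarith)]
    have h := intervalIntegral.norm_integral_le_of_norm_le_const
      (C := M) (f := fun r => v r x) (a := s - τ) (b := s) ?_
    · calc ‖∫ r in (s - τ)..s, v r x‖ ≤ M * |s - (s - τ)| := h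
        _ = M * τ := by rw [show s - (s - τ) = τ by ring, abs_of_pos hτ]
    · intro r hr
      rw [Set.uIoc_of_le (by linarith)] at hr
      exact hA' r (by linarith [hr.1]) x hx
  -- X bounds
  have hX_nonneg : ∀ r, -τ ≤ r → 0 ≤ X r := by
    intro r hr
    rcases le_or_gt r 0 with h | h
    · rw [hX_init r ⟨hr, h⟩]
      exact (hdiam_le (η r) (hη_sliceK r hr)).2
    · rw [hX_def r h.le]
      have h2 : 0 ≤ ∫ s in (0:ℝ)..r, diamF d Ω₀ (v s) := by
        apply intervalIntegral.integral_nonneg h.le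
        intro s hs
        exact (hdiam_le (v s) (hv_sliceK s (by linarith [hs.1]))).2
      have h3 := (hdiam_le (η 0) (hη_sliceK 0 hτle)).2
      linarith
  have hdX_le_X : ∀ r, -τ ≤ r → diamF d Ω₀ (η r) ≤ X r := by
    intro r hr
    rcases le_or_gt r 0 with h | h
    · rw [hX_init r ⟨hr, h⟩]
    · rw [hX_def r h.le, hdiamF_eq]
      apply Real.sSup_le
      · rintro ρ ⟨x, hx, y, hy, rfl⟩
        have e1 : η r x - η r y = (η 0 x - η 0 y) + ∫ s in (0:ℝ)..r, (v s x - v s y) := by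
          have ex := hηFTC x hx 0 r (by linarith) h.le
          have ey := hηFTC y hy 0 r (by linarith) h.le
          have hsub : (∫ s in (0:ℝ)..r, (v s x - v s y)) =
              (∫ s in (0:ℝ)..r, v s x) - ∫ s in (0:ℝ)..r, v s y := by
            apply intervalIntegral.integral_sub
            · apply ContinuousOn.intervalIntegrable
              rw [Set.uIcc_of_le h.le]
              exact (hv_time x hx).mono (fun s hs => by
                simp only [Set.mem_Ici]; linarith [hs.1])
            · apply ContinuousOn.intervalIntegrable
              rw [Set.uIcc_of_le h.le]
              exact (hv_time y hy).mono (fun s hs => by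
                simp only [Set.mem_Ici]; linarith [hs.1])
          rw [hsub, ex, ey]
          abel
        have h2 : ‖∫ s in (0:ℝ)..r, (v s x - v s y)‖ ≤ ∫ s in (0:ℝ)..r, diamF d Ω₀ (v s) := by
          calc ‖∫ s in (0:ℝ)..r, (v s x - v s y)‖
              ≤ ∫ s in (0:ℝ)..r, ‖v s x - v s y‖ :=
                intervalIntegral.norm_integral_le_integral_norm h.le
            _ ≤ ∫ s in (0:ℝ)..r, diamF d Ω₀ (v s) := by
                apply intervalIntegral.integral_mono_on h.le
                · apply ContinuousOn.intervalIntegrable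
                  rw [Set.uIcc_of_le h.le]
                  exact (((hv_time x hx).mono (fun s hs => by
                    simp only [Set.mem_Ici]; linarith [hs.1])).sub
                    ((hv_time y hy).mono (fun s hs => by
                      simp only [Set.mem_Ici]; linarith [hs.1]))).norm
                · apply ContinuousOn.intervalIntegrable
                  rw [Set.uIcc_of_le h.le]
                  exact hdV_cont.mono (fun s hs => by
                    simp only [Set.mem_Ici]; linarith [hs.1])
                · intro s hs
                  exact (hdiam_le (v s) (hv_sliceK s (by linarith [hs.1]))).1 x hx y hy
        calc ‖η r x - η r y‖ = ‖(η 0 x - η 0 y) + ∫ s in (0:ℝ)..r, (v s x - v s y)‖ := by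
              rw [e1]
          _ ≤ ‖η 0 x - η 0 y‖ + ‖∫ s in (0:ℝ)..r, (v s x - v s y)‖ := norm_add_le _ _
          _ ≤ diamF d Ω₀ (η 0) + ∫ s in (0:ℝ)..r, diamF d Ω₀ (v s) :=
              add_le_add ((hdiam_le (η 0) (hη_sliceK 0 hτle)).1 x hx y hy) h2
      · rw [← hX_def r h.le]
        exact hX_nonneg r hr
  -- lower bound on the influence weights
  have hψ_ge : ∀ s, 0 ≤ s → ∀ x ∈ closure Ω₀, ∀ y ∈ closure Ω₀,
      ψt (X (s - τ) + M * τ) ≤ ψ (η s x - η (s - τ) y) := by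
    intro s hs x hx y hy
    have hsτ : -τ ≤ s - τ := by linarith
    have harg : 0 ≤ X (s - τ) + M * τ :=
      add_nonneg (hX_nonneg _ hsτ) (mul_nonneg hM_nonneg hτ.le)
    rw [hψ_eq]
    apply hψ_anti (Set.mem_Ici.mpr (norm_nonneg _)) (Set.mem_Ici.mpr harg)
    calc ‖η s x - η (s - τ) y‖
        = ‖(η s x - η (s - τ) x) + (η (s - τ) x - η (s - τ) y)‖ := by
          rw [sub_add_sub_cancel]
      _ ≤ ‖η s x - η (s - τ) x‖ + ‖η (s - τ) x - η (s - τ) y‖ := norm_add_le _ _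
      _ ≤ M * τ + diamF d Ω₀ (η (s - τ)) :=
          add_le_add (hdisp x hx s hs)
            ((hdiam_le (η (s - τ)) (hη_sliceK _ hsτ)).1 x hx y hy)
      _ ≤ M * τ + X (s - τ) := by linarith [hdX_le_X (s - τ) hsτ]
      _ = X (s - τ) + M * τ := by ring
  -- primitive of dVe and part (i)
  have hP_deriv : ∀ t : ℝ, HasDerivAt (fun u => ∫ s in (0:ℝ)..u, dVe s) (dVe t) t := by
    intro t
    exact intervalIntegral.integral_hasDerivAt_right (hdVe_cont.intervalIntegrable 0 t)
      (hdVe_cont.stronglyMeasurableAtFilter volume (nhds t)) hdVe_cont.continuousAt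
  have hXP : ∀ t : ℝ, 0 ≤ t → X t = diamF d Ω₀ (η 0) + ∫ s in (0:ℝ)..t, dVe s := by
    intro t ht
    rw [hX_def t ht]
    congr 1
    apply intervalIntegral.integral_congr
    intro s hs
    rw [Set.uIcc_of_le ht] at hs
    exact (hdVe_eq s (by linarith [hs.1])).symm
  have hXderiv : ∀ t, 0 < t → HasDerivAt X (diamF d Ω₀ (v t)) t := by
    intro t ht
    have h1 : HasDerivAt (fun u => diamF d Ω₀ (η 0) + ∫ s in (0:ℝ)..u, dVe s) (dVe t) t :=
      (hP_deriv t).const_add _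
    have h2 : X =ᶠ[nhds t] (fun u => diamF d Ω₀ (η 0) + ∫ s in (0:ℝ)..u, dVe s) := by
      filter_upwards [Ioi_mem_nhds ht] with u hu
      exact hXP u (le_of_lt (Set.mem_Ioi.mp hu))
    have h3 := h1.congr_of_eventuallyEq h2
    rwa [hdVe_eq t (by linarith)] at h3
  -- continuity of (an extension of) X
  have hP_cont : Continuous (fun u : ℝ => ∫ s in (0:ℝ)..u, dVe s) := by
    apply continuous_iff_continuousAt.mpr
    intro t
    exact (hP_deriv t).continuousAt
  set Xc : ℝ → ℝ := fun t =>
    if t ≤ 0 then dXe t else diamF d Ω₀ (η 0) + ∫ s in (0:ℝ)..t, dVe s with hXc_def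
  have hXc_cont : Continuous Xc := by
    simp only [hXc_def]
    apply Continuous.if_le hdXe_cont (continuous_const.add hP_cont)
      continuous_id continuous_const
    intro x hx
    have hx0 : x = 0 := hx
    subst hx0
    rw [hdXe_eq 0 hτle]; simp only [Pi.add_apply, intervalIntegral.integral_same, add_zero]
  have hXXc : ∀ t, -τ ≤ t → X t = Xc t := by
    intro t ht
    simp only [hXc_def]
    by_cases h : t ≤ 0
    · rw [if_pos h, hX_init t ⟨ht, h⟩, hdXe_eq t ht]
    · rw [if_neg h]
      exact hXP t (by linarith)
  -- radial influence as a globally continuous function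
  set e₁ : Euc d := EuclideanSpace.single (⟨0, hdpos⟩ : Fin d) (1:ℝ) with he₁_def
  have he₁ : ‖e₁‖ = 1 := by rw [he₁_def, EuclideanSpace.norm_single]; norm_num
  set ψtc : ℝ → ℝ := fun r => ψ ((max r 0) • e₁) with hψtc_def
  have hψtc_cont : Continuous ψtc := by
    simp only [hψtc_def]
    exact hψ_lip.continuous.comp ((continuous_id.max continuous_const).smul continuous_const)
  have hψtc_eq : ∀ r, 0 ≤ r → ψtc r = ψt r := by
    intro r hr
    simp only [hψtc_def]
    rw [hψ_eq, norm_smul, he₁, mul_one, Real.norm_eq_abs,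
      abs_of_nonneg (le_max_right r 0), max_eq_left hr]
  -- the function R and its primitive
  set R : ℝ → ℝ := fun s =>
    Real.exp s * ((1 - ψtc (Xc (s - τ) + M * τ)) * dVe (s - τ)) with hR_def
  have hR_cont : Continuous R := by
    simp only [hR_def]
    have c1 : Continuous fun s : ℝ => Xc (s - τ) + M * τ :=
      (hXc_cont.comp (continuous_id.sub continuous_const)).add continuous_const
    have c2 : Continuous fun s : ℝ => ψtc (Xc (s - τ) + M * τ) := hψtc_cont.comp c1
    have c3 : Continuous fun s : ℝ => dVe (s - τ) :=
      hdVe_cont.comp (continuous_id.sub continuous_const)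
    exact continuous_exp.mul ((continuous_const.sub c2).mul c3)
  have hR_eq : ∀ s, 0 ≤ s →
      R s = Real.exp s * ((1 - ψt (X (s - τ) + M * τ)) * diamF d Ω₀ (v (s - τ))) := by
    intro s hs
    have hsτ : -τ ≤ s - τ := by linarith
    have harg : 0 ≤ X (s - τ) + M * τ :=
      add_nonneg (hX_nonneg _ hsτ) (mul_nonneg hM_nonneg hτ.le)
    simp only [hR_def]
    rw [← hXXc (s - τ) hsτ, hψtc_eq _ harg, hdVe_eq _ hsτ]
  have hQ_deriv : ∀ t : ℝ, HasDerivAt (fun u => ∫ s in (0:ℝ)..u, R s) (R t) t := by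
    intro t
    exact intervalIntegral.integral_hasDerivAt_right (hR_cont.intervalIntegrable 0 t)
      (hR_cont.stronglyMeasurableAtFilter volume (nhds t)) hR_cont.continuousAt
  have hVrep : ∀ t, 0 ≤ t →
      V t = Real.exp (-t) * (diamF d Ω₀ (v 0) + ∫ s in (0:ℝ)..t, R s) := by
    intro t ht
    rw [hV_def t ht]
    have h1 : ∀ s ∈ Set.uIcc (0:ℝ) t,
        (1 - ψt (X (s - τ) + M * τ)) * diamF d Ω₀ (v (s - τ)) * Real.exp (s - t) =
        R s * Real.exp (-t) := by
      intro s hs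
      rw [Set.uIcc_of_le ht] at hs
      rw [hR_eq s hs.1, show s - t = s + -t by ring, Real.exp_add]
      ring
    rw [intervalIntegral.integral_congr h1, intervalIntegral.integral_mul_const]
    ring
  -- the key contraction estimate
  have hFdiff : ∀ s, 0 ≤ s → ∀ x₁ ∈ closure Ω₀, ∀ x₂ ∈ closure Ω₀,
      ‖F s x₁ - F s x₂‖ ≤ (1 - ψt (X (s - τ) + M * τ)) * diamF d Ω₀ (v (s - τ)) := by
    intro s hs x₁ hx₁ x₂ hx₂
    have hsτ : -τ ≤ s - τ := by linarith
    set m := ψt (X (s - τ) + M * τ) with hm_def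
    set D := diamF d Ω₀ (v (s - τ)) with hD_def
    have hD0 : 0 ≤ D := (hdiam_le _ (hv_sliceK _ hsτ)).2
    have harg : 0 ≤ X (s - τ) + M * τ :=
      add_nonneg (hX_nonneg _ hsτ) (mul_nonneg hM_nonneg hτ.le)
    have hm0 : 0 < m := hψ_pos _ harg
    obtain ⟨Cu, hCu0, hCu⟩ := hvbound (s - τ) hsτ
    have hu_aesm : AEStronglyMeasurable (fun y => v (s - τ) y) (volume.restrict Ω₀) :=
      ((hv_sliceK _ hsτ).mono hsubK).aestronglyMeasurable hmesΩ
    have hρu_int : Integrable (fun y => ρ₀ y • v (s - τ) y) (volume.restrict Ω₀) := by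
      apply Integrable.mono' (hρ_int.mul_const Cu) (hρ_meas.aestronglyMeasurable.smul hu_aesm)
      filter_upwards [MeasureTheory.ae_restrict_mem hmesΩ] with y hy
      show ‖ρ₀ y • v (s - τ) y‖ ≤ ρ₀ y * Cu
      rw [norm_smul, Real.norm_eq_abs, abs_of_nonneg (hρ_nn y)]
      exact mul_le_mul_of_nonneg_left (hCu y (hsubK hy)) (hρ_nn y)
    have hmu_int : Integrable (fun y => (m * ρ₀ y) • v (s - τ) y) (volume.restrict Ω₀) := by
      have he : (fun y => (m * ρ₀ y) • v (s - τ) y)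
          = fun y => m • (ρ₀ y • v (s - τ) y) := by
        funext y; rw [smul_smul]
      rw [he]
      exact hρu_int.smul m
    have hmρ_sum : ∫ y in Ω₀, m * ρ₀ y = m := by
      rw [integral_const_mul, hρ_one, mul_one]
    have hgen : ∀ x' ∈ closure Ω₀,
        Integrable (fun y => ((den s x')⁻¹ * (ψ (η s x' - η (s - τ) y) * ρ₀ y)) • v (s - τ) y)
          (volume.restrict Ω₀) ∧
        Integrable (fun y => (den s x')⁻¹ * (ψ (η s x' - η (s - τ) y) * ρ₀ y))
          (volume.restrict Ω₀) ∧
        (∫ y in Ω₀, (den s x')⁻¹ * (ψ (η s x' - η (s - τ) y) * ρ₀ y)) = 1 ∧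
        F s x' = ∫ y in Ω₀, ((den s x')⁻¹ * (ψ (η s x' - η (s - τ) y) * ρ₀ y)) • v (s - τ) y := by
      intro x' hx'
      have hdp := hden_pos s hs x' hx'
      have hfold : (∫ y in Ω₀, ψ (η s x' - η (s - τ) y) * ρ₀ y) = den s x' := by
        simp only [hden_def]
      refine ⟨?_, ?_, ?_, ?_⟩
      · have he : (fun y => ((den s x')⁻¹ * (ψ (η s x' - η (s - τ) y) * ρ₀ y)) • v (s - τ) y)
            = fun y => (den s x')⁻¹ • ((ψ (η s x' - η (s - τ) y) * ρ₀ y) • v (s - τ) y) := by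
          funext y; rw [smul_smul]
        rw [he]
        exact (hnum_int s hs x' hx').smul (den s x')⁻¹
      · exact (hden_int s hs x' hx').const_mul _
      · rw [integral_const_mul, hfold, inv_mul_cancel₀ hdp.ne']
      · have he : F s x' = (den s x')⁻¹ •
            (∫ y in Ω₀, (ψ (η s x' - η (s - τ) y) * ρ₀ y) • v (s - τ) y) := by
          simp only [hF_def, hnum_def]
        rw [he, ← MeasureTheory.integral_smul]
        congr 1
        funext y
        rw [smul_smul]
    have hq_nonneg : ∀ x' ∈ closure Ω₀, (0 : Euc d → ℝ) ≤ᵐ[volume.restrict Ω₀]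
        (fun y => (den s x')⁻¹ * (ψ (η s x' - η (s - τ) y) * ρ₀ y) - m * ρ₀ y) := by
      intro x' hx'
      filter_upwards [MeasureTheory.ae_restrict_mem hmesΩ] with y hy
      have hdp := hden_pos s hs x' hx'
      have hd1 := hden_le_one s hs x' hx'
      have hψge := hψ_ge s hs x' hx' y (hsubK hy)
      have h1 : m * ρ₀ y ≤ (den s x')⁻¹ * (ψ (η s x' - η (s - τ) y) * ρ₀ y) := by
        rw [le_inv_mul_iff₀ hdp]
        have h2 : den s x' * (m * ρ₀ y) ≤ 1 * (m * ρ₀ y) :=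
          mul_le_mul_of_nonneg_right hd1 (mul_nonneg hm0.le (hρ_nn y))
        have h3 : m * ρ₀ y ≤ ψ (η s x' - η (s - τ) y) * ρ₀ y :=
          mul_le_mul_of_nonneg_right hψge (hρ_nn y)
        linarith
      simp only [Pi.zero_apply]
      linarith
    have hqint : ∀ x' ∈ closure Ω₀, Integrable
        (fun y => (den s x')⁻¹ * (ψ (η s x' - η (s - τ) y) * ρ₀ y) - m * ρ₀ y)
        (volume.restrict Ω₀) := by
      intro x' hx'
      exact ((hgen x' hx').2.1).sub (hρ_int.const_mul m)
    have hqsum : ∀ x' ∈ closure Ω₀,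
        (∫ y in Ω₀, ((den s x')⁻¹ * (ψ (η s x' - η (s - τ) y) * ρ₀ y) - m * ρ₀ y)) = 1 - m := by
      intro x' hx'
      rw [MeasureTheory.integral_sub (hgen x' hx').2.1 (hρ_int.const_mul m),
        (hgen x' hx').2.2.1, hmρ_sum]
    have hqu_int : ∀ x' ∈ closure Ω₀, Integrable
        (fun y => ((den s x')⁻¹ * (ψ (η s x' - η (s - τ) y) * ρ₀ y) - m * ρ₀ y) • v (s - τ) y)
        (volume.restrict Ω₀) := by
      intro x' hx'
      have he : (fun y => ((den s x')⁻¹ * (ψ (η s x' - η (s - τ) y) * ρ₀ y) - m * ρ₀ y) • v (s - τ) y)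
          = fun y => ((den s x')⁻¹ * (ψ (η s x' - η (s - τ) y) * ρ₀ y)) • v (s - τ) y
              - (m * ρ₀ y) • v (s - τ) y := by
        funext y; rw [sub_smul]
      rw [he]
      exact ((hgen x' hx').1).sub hmu_int
    have hqu_eq : ∀ x' ∈ closure Ω₀,
        (∫ y in Ω₀, ((den s x')⁻¹ * (ψ (η s x' - η (s - τ) y) * ρ₀ y) - m * ρ₀ y) • v (s - τ) y)
          = F s x' - ∫ y in Ω₀, (m * ρ₀ y) • v (s - τ) y := by
      intro x' hx'
      have he : (fun y => ((den s x')⁻¹ * (ψ (η s x' - η (s - τ) y) * ρ₀ y) - m * ρ₀ y) • v (s - τ) y)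
          = fun y => ((den s x')⁻¹ * (ψ (η s x' - η (s - τ) y) * ρ₀ y)) • v (s - τ) y
              - (m * ρ₀ y) • v (s - τ) y := by
        funext y; rw [sub_smul]
      rw [he, MeasureTheory.integral_sub (hgen x' hx').1 hmu_int, ← (hgen x' hx').2.2.2]
    have hmain := avg_diff_le (μ := volume.restrict Ω₀) (s := Ω₀)
      (u := fun y => v (s - τ) y) (D := D)
      (MeasureTheory.ae_restrict_mem hmesΩ)
      (hq_nonneg x₁ hx₁) (hq_nonneg x₂ hx₂)
      (hqint x₁ hx₁) (hqint x₂ hx₂)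
      (hqu_int x₁ hx₁) (hqu_int x₂ hx₂)
      (by rw [hqsum x₁ hx₁, hqsum x₂ hx₂])
      (fun y hy z hz => (hdiam_le (v (s - τ)) (hv_sliceK _ hsτ)).1 y (hsubK hy) z (hsubK hz))
      hD0
    rw [hqu_eq x₁ hx₁, hqu_eq x₂ hx₂, hqsum x₁ hx₁] at hmain
    have hfin : F s x₁ - F s x₂ =
        (F s x₁ - ∫ y in Ω₀, (m * ρ₀ y) • v (s - τ) y) -
        (F s x₂ - ∫ y in Ω₀, (m * ρ₀ y) • v (s - τ) y) := by abel
    rw [hfin]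
    exact hmain
  -- part (iii)
  have hiii : ∀ t, -τ ≤ t → diamF d Ω₀ (v t) ≤ V t := by
    intro t ht
    rcases le_or_gt t 0 with h | h
    · rw [hV_init t ⟨ht, h⟩]
    · have hIIx : ∀ x ∈ Ω₀, IntervalIntegrable (fun s => Real.exp s • F s x) volume 0 t :=
        fun x hx => hF_ii x (hsubK hx) t h.le
      have hbound : ∀ x ∈ Ω₀, ∀ y ∈ Ω₀, ‖v t x - v t y‖ ≤
          Real.exp (-t) * (diamF d Ω₀ (v 0) + ∫ s in (0:ℝ)..t, R s) := by
        intro x hx y hy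
        have hdx := hDuh x hx t h
        have hdy := hDuh y hy t h
        have hsub : Real.exp t • (v t x - v t y) - (v 0 x - v 0 y)
            = ∫ s in (0:ℝ)..t, (Real.exp s • F s x - Real.exp s • F s y) := by
          rw [intervalIntegral.integral_sub (hIIx x hx) (hIIx y hy), hdx, hdy]
          rw [smul_sub]
          abel
        have hptw : ∀ s ∈ Set.Icc (0:ℝ) t,
            ‖Real.exp s • F s x - Real.exp s • F s y‖ ≤ R s := by
          intro s hs
          rw [← smul_sub, norm_smul, Real.norm_eq_abs, abs_of_pos (Real.exp_pos s),
            hR_eq s hs.1]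
          exact mul_le_mul_of_nonneg_left
            (hFdiff s hs.1 x (hsubK hx) y (hsubK hy)) (Real.exp_pos s).le
        have hIb : ‖∫ s in (0:ℝ)..t, (Real.exp s • F s x - Real.exp s • F s y)‖
            ≤ ∫ s in (0:ℝ)..t, R s := by
          calc ‖∫ s in (0:ℝ)..t, (Real.exp s • F s x - Real.exp s • F s y)‖
              ≤ ∫ s in (0:ℝ)..t, ‖Real.exp s • F s x - Real.exp s • F s y‖ :=
                intervalIntegral.norm_integral_le_integral_norm h.le
            _ ≤ ∫ s in (0:ℝ)..t, R s :=
                intervalIntegral.integral_mono_on h.le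
                  (((hIIx x hx).sub (hIIx y hy)).norm)
                  (hR_cont.intervalIntegrable 0 t) hptw
        have h7 : Real.exp t * ‖v t x - v t y‖ ≤
            diamF d Ω₀ (v 0) + ∫ s in (0:ℝ)..t, R s := by
          have he : Real.exp t • (v t x - v t y) =
              (∫ s in (0:ℝ)..t, (Real.exp s • F s x - Real.exp s • F s y)) + (v 0 x - v 0 y) :=
            sub_eq_iff_eq_add.mp hsub
          calc Real.exp t * ‖v t x - v t y‖ = ‖Real.exp t • (v t x - v t y)‖ := by
                rw [norm_smul, Real.norm_eq_abs, abs_of_pos (Real.exp_pos t)]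
            _ = ‖(∫ s in (0:ℝ)..t, (Real.exp s • F s x - Real.exp s • F s y)) + (v 0 x - v 0 y)‖ := by
                rw [he]
            _ ≤ ‖∫ s in (0:ℝ)..t, (Real.exp s • F s x - Real.exp s • F s y)‖ + ‖v 0 x - v 0 y‖ :=
                norm_add_le _ _
            _ ≤ (∫ s in (0:ℝ)..t, R s) + diamF d Ω₀ (v 0) :=
                add_le_add hIb ((hdiam_le (v 0) (hv_sliceK 0 hτle)).1 x (hsubK hx) y (hsubK hy))
            _ = diamF d Ω₀ (v 0) + ∫ s in (0:ℝ)..t, R s := by ring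
        have hexp : Real.exp (-t) * Real.exp t = 1 := by
          rw [← Real.exp_add]; simp
        calc ‖v t x - v t y‖ = (Real.exp (-t) * Real.exp t) * ‖v t x - v t y‖ := by
              rw [hexp, one_mul]
          _ = Real.exp (-t) * (Real.exp t * ‖v t x - v t y‖) := by ring
          _ ≤ Real.exp (-t) * (diamF d Ω₀ (v 0) + ∫ s in (0:ℝ)..t, R s) :=
              mul_le_mul_of_nonneg_left h7 (Real.exp_pos (-t)).le
      have hboundK : ∀ x ∈ closure Ω₀, ∀ y ∈ closure Ω₀, ‖v t x - v t y‖ ≤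
          Real.exp (-t) * (diamF d Ω₀ (v 0) + ∫ s in (0:ℝ)..t, R s) := by
        have hcl : closure (Ω₀ ×ˢ Ω₀) = closure Ω₀ ×ˢ closure Ω₀ := closure_prod_eq
        have hcont2 : ContinuousOn (fun p : Euc d × Euc d => ‖v t p.1 - v t p.2‖)
            (closure (Ω₀ ×ˢ Ω₀)) := by
          rw [hcl]
          have hj1 : ContinuousOn (fun p : Euc d × Euc d => v t p.1)
              (closure Ω₀ ×ˢ closure Ω₀) :=
            (hv_sliceK t (by linarith)).comp continuous_fst.continuousOn (fun p hp => hp.1)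
          have hj2 : ContinuousOn (fun p : Euc d × Euc d => v t p.2)
              (closure Ω₀ ×ˢ closure Ω₀) :=
            (hv_sliceK t (by linarith)).comp continuous_snd.continuousOn (fun p hp => hp.2)
          exact (hj1.sub hj2).norm
        have hcc := le_on_closure' hcont2 (fun p hp => hbound p.1 hp.1 p.2 hp.2)
        intro x hx y hy
        exact hcc (x, y) (by rw [hcl]; exact ⟨hx, hy⟩)
      rw [hVrep t h.le, hdiamF_eq]
      apply Real.sSup_le
      · rintro r ⟨x, hx, y, hy, rfl⟩
        exact hboundK x hx y hy
      · obtain ⟨x₀, hx₀⟩ := hKne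
        simpa using hboundK x₀ hx₀ x₀ hx₀
  -- part (ii)
  have hii : ∀ t, 0 < t → ∃ V' : ℝ, HasDerivAt V V' t ∧
      V' ≤ -V t + (1 - ψt (X (t - τ) + M * τ)) * V (t - τ) := by
    intro t ht
    have hd1 : HasDerivAt (fun u : ℝ => Real.exp (-u)) (-Real.exp (-t)) t := by
      simpa using (hasDerivAt_neg t).exp
    have hd2 : HasDerivAt (fun u => diamF d Ω₀ (v 0) + ∫ s in (0:ℝ)..u, R s) (R t) t :=
      (hQ_deriv t).const_add _
    have hd3 := hd1.mul hd2
    have hev : V =ᶠ[nhds t]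
        (fun u => Real.exp (-u) * (diamF d Ω₀ (v 0) + ∫ s in (0:ℝ)..u, R s)) := by
      filter_upwards [Ioi_mem_nhds ht] with u hu
      exact hVrep u (le_of_lt (Set.mem_Ioi.mp hu))
    refine ⟨_, hd3.congr_of_eventuallyEq hev, ?_⟩
    show -Real.exp (-t) * (diamF d Ω₀ (v 0) + ∫ s in (0:ℝ)..t, R s) + Real.exp (-t) * R t ≤ _
    have hVt := hVrep t ht.le
    have hsτ : -τ ≤ t - τ := by linarith
    have harg : 0 ≤ X (t - τ) + M * τ :=
      add_nonneg (hX_nonneg _ hsτ) (mul_nonneg hM_nonneg hτ.le)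
    have hm1 : ψt (X (t - τ) + M * τ) ≤ 1 := by
      rw [← hψ01]
      exact hψ_anti (Set.mem_Ici.mpr le_rfl) (Set.mem_Ici.mpr harg) harg
    have h5 : diamF d Ω₀ (v (t - τ)) ≤ V (t - τ) := hiii (t - τ) hsτ
    have hexp : Real.exp (-t) * Real.exp t = 1 := by
      rw [← Real.exp_add]; simp
    have he2 : Real.exp (-t) * R t =
        (1 - ψt (X (t - τ) + M * τ)) * diamF d Ω₀ (v (t - τ)) := by
      rw [hR_eq t ht.le]
      calc Real.exp (-t) * (Real.exp t * ((1 - ψt (X (t - τ) + M * τ)) * diamF d Ω₀ (v (t - τ))))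
          = (Real.exp (-t) * Real.exp t) *
              ((1 - ψt (X (t - τ) + M * τ)) * diamF d Ω₀ (v (t - τ))) := by ring
        _ = (1 - ψt (X (t - τ) + M * τ)) * diamF d Ω₀ (v (t - τ)) := by rw [hexp, one_mul]
    have hfinal : (1 - ψt (X (t - τ) + M * τ)) * diamF d Ω₀ (v (t - τ))
        ≤ (1 - ψt (X (t - τ) + M * τ)) * V (t - τ) :=
      mul_le_mul_of_nonneg_left h5 (by linarith)
    have hVt' : -Real.exp (-t) * (diamF d Ω₀ (v 0) + ∫ s in (0:ℝ)..t, R s) = -V t := by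
      rw [hVt]; ring
    calc -Real.exp (-t) * (diamF d Ω₀ (v 0) + ∫ s in (0:ℝ)..t, R s) + Real.exp (-t) * R t
        = -V t + Real.exp (-t) * R t := by rw [hVt']
      _ = -V t + (1 - ψt (X (t - τ) + M * τ)) * diamF d Ω₀ (v (t - τ)) := by rw [he2]
      _ ≤ -V t + (1 - ψt (X (t - τ) + M * τ)) * V (t - τ) := by linarith
  exact ⟨hXderiv, hii, hiii⟩
end
end

section
/- Let d ∈ ℕ, let Ω₀ ⊂ ℝ^d be a nonempty bounded open set, and let ρ₀ : Ω₀ → ℝ be nonnegative measurable with ∫_{Ω₀} ρ₀ = 1. Let ψ : ℝ^d → ℝ be Lipschitz continuous of the form ψ(x) = ψ̃(|x|) with ψ̃ : [0,∞) → (0,∞) nonincreasing and ψ̃(0) = 1. Let ζ : Ω₀ → ℝ^d and w : Ω₀ → ℝ^d be bounded measurable functions, and for η ∈ ℝ^d define F(η) := ∫_{Ω₀} ψ(η − ζ(y))·w(y)·ρ₀(y) dy and G(η) := ∫_{Ω₀} ψ(η − ζ(y))·ρ₀(y) dy. Then for every R > 0 there exists a constant C_R > 0 such that for all η¹, η² ∈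 ℝ^d with |η¹| ≤ R and |η²| ≤ R, one has |F(η¹)/G(η¹) − F(η²)/G(η²)| ≤ C_R·|η¹ − η²|. -/
open MeasureTheory Real Set

/-- **Local Lipschitz continuity of the normalized alignment force (Theorem 2.1, key
estimate).** With `F(η) = ∫_{Ω₀} ψ(η - ζ(y)) w(y) ρ₀(y) dy` and
`G(η) = ∫_{Ω₀} ψ(η - ζ(y)) ρ₀(y) dy`, for every `R > 0` there is `C_R > 0` such that
`|F(η¹)/G(η¹) - F(η²)/G(η²)| ≤ C_R |η¹ - η²|` whenever `|η¹|, |η²| ≤ R`. -/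
theorem stmt_7 {d : ℕ} (Ω₀ : Set (EuclideanSpace ℝ (Fin d)))
    (hΩo : IsOpen Ω₀) (hΩne : Ω₀.Nonempty) (hΩb : Bornology.IsBounded Ω₀)
    (ρ₀ : EuclideanSpace ℝ (Fin d) → ℝ) (hρ_meas : Measurable ρ₀)
    (hρ_nonneg : ∀ y, 0 ≤ ρ₀ y) (hρ_int : IntegrableOn ρ₀ Ω₀)
    (hρ_one : ∫ y in Ω₀, ρ₀ y = 1)
    (ψ : EuclideanSpace ℝ (Fin d) → ℝ) (ψt : ℝ → ℝ)
    (hψ_rad : ∀ x, ψ x = ψt ‖x‖) (hψt_pos : ∀ r : ℝ, 0 ≤ r → 0 < ψt r)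
    (hψt_anti : AntitoneOn ψt (Set.Ici 0)) (hψt_one : ψt 0 = 1)
    (hψ_lip : ∃ K : NNReal, LipschitzWith K ψ)
    (ζ w : EuclideanSpace ℝ (Fin d) → EuclideanSpace ℝ (Fin d))
    (hζ_meas : Measurable ζ) (hw_meas : Measurable w)
    (hζ_bdd : ∃ Bζ : ℝ, ∀ y ∈ Ω₀, ‖ζ y‖ ≤ Bζ)
    (hw_bdd : ∃ Bw : ℝ, ∀ y ∈ Ω₀, ‖w y‖ ≤ Bw) :
    ∀ R : ℝ, 0 < R → ∃ C : ℝ, 0 < C ∧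
      ∀ η₁ η₂ : EuclideanSpace ℝ (Fin d), ‖η₁‖ ≤ R → ‖η₂‖ ≤ R →
        ‖(∫ y in Ω₀, ψ (η₁ - ζ y) * ρ₀ y)⁻¹ •
            (∫ y in Ω₀, (ψ (η₁ - ζ y) * ρ₀ y) • w y) -
          (∫ y in Ω₀, ψ (η₂ - ζ y) * ρ₀ y)⁻¹ •
            (∫ y in Ω₀, (ψ (η₂ - ζ y) * ρ₀ y) • w y)‖ ≤ C * ‖η₁ - η₂‖ := by
  obtain ⟨K, hK⟩ := hψ_lip
  obtain ⟨Bζ, hBζ⟩ := hζ_bdd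
  obtain ⟨Bw, hBw⟩ := hw_bdd
  intro R hR
  set Bζ' : ℝ := max Bζ 0 with hBζ'def
  set Bw' : ℝ := max Bw 0 with hBw'def
  have hBζ'0 : 0 ≤ Bζ' := le_max_right _ _
  have hBw'0 : 0 ≤ Bw' := le_max_right _ _
  have hBζ' : ∀ y ∈ Ω₀, ‖ζ y‖ ≤ Bζ' := fun y hy => (hBζ y hy).trans (le_max_left _ _)
  have hBw' : ∀ y ∈ Ω₀, ‖w y‖ ≤ Bw' := fun y hy => (hBw y hy).trans (le_max_left _ _)
  set m : ℝ := ψt (R + Bζ') with hmdef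
  have hm0 : 0 < m := hψt_pos _ (by positivity)
  -- global bounds on ψ
  have hψ_pos : ∀ x, 0 < ψ x := fun x => by rw [hψ_rad]; exact hψt_pos _ (norm_nonneg x)
  have hψ_le_one : ∀ x, ψ x ≤ 1 := fun x => by
    rw [hψ_rad, ← hψt_one]
    exact hψt_anti (mem_Ici.2 le_rfl) (mem_Ici.2 (norm_nonneg x)) (norm_nonneg x)
  have hψ_lb : ∀ (η : EuclideanSpace ℝ (Fin d)), ‖η‖ ≤ R → ∀ y ∈ Ω₀, m ≤ ψ (η - ζ y) := by
    intro η hη y hy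
    rw [hψ_rad]
    refine hψt_anti (mem_Ici.2 (norm_nonneg _)) (mem_Ici.2 (by positivity)) ?_
    calc ‖η - ζ y‖ ≤ ‖η‖ + ‖ζ y‖ := norm_sub_le _ _
    _ ≤ R + Bζ' := add_le_add hη (hBζ' y hy)
  have hψ_cont : Continuous ψ := hK.continuous
  have hΩm : MeasurableSet Ω₀ := hΩo.measurableSet
  -- measurability
  have hmeasG : ∀ (η : EuclideanSpace ℝ (Fin d)),
      Measurable fun y => ψ (η - ζ y) * ρ₀ y := fun η =>
    (hψ_cont.measurable.comp (measurable_const.sub hζ_meas)).mul hρ_meas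
  -- integrability of G integrand
  have hintG : ∀ (η : EuclideanSpace ℝ (Fin d)),
      IntegrableOn (fun y => ψ (η - ζ y) * ρ₀ y) Ω₀ := by
    intro η
    refine Integrable.mono hρ_int ((hmeasG η).aestronglyMeasurable.restrict) ?_
    filter_upwards with y
    rw [norm_mul]
    calc ‖ψ (η - ζ y)‖ * ‖ρ₀ y‖ ≤ 1 * ‖ρ₀ y‖ := by
          apply mul_le_mul_of_nonneg_right _ (norm_nonneg _)
          rw [Real.norm_eq_abs, abs_of_pos (hψ_pos _)]
          exact hψ_le_one _
    _ = ‖ρ₀ y‖ := one_mul _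
  -- integrability of F integrand
  have hintF : ∀ (η : EuclideanSpace ℝ (Fin d)),
      IntegrableOn (fun y => (ψ (η - ζ y) * ρ₀ y) • w y) Ω₀ := by
    intro η
    refine (hρ_int.const_mul Bw').mono
      (((hmeasG η).aestronglyMeasurable.restrict).smul hw_meas.aestronglyMeasurable.restrict) ?_
    filter_upwards [ae_restrict_mem hΩm] with y hy
    rw [norm_smul, norm_mul]
    have h1 : ‖ψ (η - ζ y)‖ ≤ 1 := by
      rw [Real.norm_eq_abs, abs_of_pos (hψ_pos _)]; exact hψ_le_one _
    have : ‖ψ (η - ζ y)‖ * ‖ρ₀ y‖ * ‖w y‖ ≤ 1 * ‖ρ₀ y‖ * Bw' := by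
      gcongr <;> first | exact hBw' y hy | exact h1 | positivity
    calc ‖ψ (η - ζ y)‖ * ‖ρ₀ y‖ * ‖w y‖ ≤ 1 * ‖ρ₀ y‖ * Bw' := this
    _ = ‖Bw' * ρ₀ y‖ := by
        rw [one_mul, norm_mul, Real.norm_eq_abs Bw', abs_of_nonneg hBw'0, mul_comm]
  -- lower bound on G
  have hGlb : ∀ (η : EuclideanSpace ℝ (Fin d)), ‖η‖ ≤ R →
      m ≤ ∫ y in Ω₀, ψ (η - ζ y) * ρ₀ y := by
    intro η hη
    have : ∫ y in Ω₀, m * ρ₀ y ≤ ∫ y in Ω₀, ψ (η - ζ y) * ρ₀ y := by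
      refine setIntegral_mono_on (hρ_int.const_mul m) (hintG η) hΩm ?_
      intro y hy
      exact mul_le_mul_of_nonneg_right (hψ_lb η hη y hy) (hρ_nonneg y)
    calc m = m * ∫ y in Ω₀, ρ₀ y := by rw [hρ_one, mul_one]
    _ = ∫ y in Ω₀, m * ρ₀ y := (integral_const_mul m _).symm
    _ ≤ _ := this
  -- upper bound on ‖F‖
  have hFub : ∀ (η : EuclideanSpace ℝ (Fin d)),
      ‖∫ y in Ω₀, (ψ (η - ζ y) * ρ₀ y) • w y‖ ≤ Bw' := by
    intro η
    have h := norm_integral_le_of_norm_le (hρ_int.const_mul Bw') ?_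
      (f := fun y => (ψ (η - ζ y) * ρ₀ y) • w y)
    · calc ‖∫ y in Ω₀, (ψ (η - ζ y) * ρ₀ y) • w y‖ ≤ ∫ y in Ω₀, Bw' * ρ₀ y := h
      _ = Bw' * ∫ y in Ω₀, ρ₀ y := integral_const_mul _ _
      _ = Bw' := by rw [hρ_one, mul_one]
    · filter_upwards [ae_restrict_mem hΩm] with y hy
      rw [norm_smul, norm_mul, Real.norm_eq_abs (ψ _), abs_of_pos (hψ_pos _),
        Real.norm_eq_abs (ρ₀ y), abs_of_nonneg (hρ_nonneg y)]
      have h1 : ψ (η - ζ y) ≤ 1 := hψ_le_one _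
      calc ψ (η - ζ y) * ρ₀ y * ‖w y‖ ≤ 1 * ρ₀ y * Bw' := by
            gcongr <;> first | exact hBw' y hy | exact h1 | exact hρ_nonneg y | exact mul_nonneg (by positivity) (hρ_nonneg y) | positivity
      _ = Bw' * ρ₀ y := by ring
  -- Lipschitz bound on G
  have hψdiff : ∀ (η₁ η₂ : EuclideanSpace ℝ (Fin d)) (y : EuclideanSpace ℝ (Fin d)),
      |ψ (η₁ - ζ y) - ψ (η₂ - ζ y)| ≤ K * ‖η₁ - η₂‖ := by
    intro η₁ η₂ y
    have := hK.dist_le_mul (η₁ - ζ y) (η₂ - ζ y)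
    rw [Real.dist_eq] at this
    calc |ψ (η₁ - ζ y) - ψ (η₂ - ζ y)| ≤ K * dist (η₁ - ζ y) (η₂ - ζ y) := this
    _ = K * ‖η₁ - η₂‖ := by rw [dist_eq_norm]; congr 1; abel_nf
  have hGlip : ∀ (η₁ η₂ : EuclideanSpace ℝ (Fin d)),
      |(∫ y in Ω₀, ψ (η₁ - ζ y) * ρ₀ y) - ∫ y in Ω₀, ψ (η₂ - ζ y) * ρ₀ y|
        ≤ K * ‖η₁ - η₂‖ := by
    intro η₁ η₂
    rw [← integral_sub (hintG η₁) (hintG η₂)]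
    have h := norm_integral_le_of_norm_le ((hρ_int.const_mul (K * ‖η₁ - η₂‖))) ?_
      (f := fun y => ψ (η₁ - ζ y) * ρ₀ y - ψ (η₂ - ζ y) * ρ₀ y)
    · rw [← Real.norm_eq_abs]
      calc ‖∫ y in Ω₀, (ψ (η₁ - ζ y) * ρ₀ y - ψ (η₂ - ζ y) * ρ₀ y)‖
          ≤ ∫ y in Ω₀, (K * ‖η₁ - η₂‖) * ρ₀ y := h
      _ = (K * ‖η₁ - η₂‖) * ∫ y in Ω₀, ρ₀ y := integral_const_mul _ _
      _ = K * ‖η₁ - η₂‖ := by rw [hρ_one, mul_one]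
    · filter_upwards with y
      rw [← sub_mul, Real.norm_eq_abs, abs_mul, abs_of_nonneg (hρ_nonneg y)]
      exact mul_le_mul_of_nonneg_right (hψdiff η₁ η₂ y) (hρ_nonneg y)
  -- Lipschitz bound on F
  have hFlip : ∀ (η₁ η₂ : EuclideanSpace ℝ (Fin d)),
      ‖(∫ y in Ω₀, (ψ (η₁ - ζ y) * ρ₀ y) • w y) - ∫ y in Ω₀, (ψ (η₂ - ζ y) * ρ₀ y) • w y‖
        ≤ K * Bw' * ‖η₁ - η₂‖ := by
    intro η₁ η₂
    rw [← integral_sub (hintF η₁) (hintF η₂)]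
    have h := norm_integral_le_of_norm_le ((hρ_int.const_mul (K * Bw' * ‖η₁ - η₂‖))) ?_
      (f := fun y => (ψ (η₁ - ζ y) * ρ₀ y) • w y - (ψ (η₂ - ζ y) * ρ₀ y) • w y)
    · calc ‖∫ y in Ω₀, ((ψ (η₁ - ζ y) * ρ₀ y) • w y - (ψ (η₂ - ζ y) * ρ₀ y) • w y)‖
          ≤ ∫ y in Ω₀, (K * Bw' * ‖η₁ - η₂‖) * ρ₀ y := h
      _ = (K * Bw' * ‖η₁ - η₂‖) * ∫ y in Ω₀, ρ₀ y := integral_const_mul _ _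
      _ = K * Bw' * ‖η₁ - η₂‖ := by rw [hρ_one, mul_one]
    · filter_upwards [ae_restrict_mem hΩm] with y hy
      rw [← sub_smul, norm_smul, ← sub_mul, Real.norm_eq_abs, abs_mul,
        abs_of_nonneg (hρ_nonneg y)]
      calc |ψ (η₁ - ζ y) - ψ (η₂ - ζ y)| * ρ₀ y * ‖w y‖
          ≤ (K * ‖η₁ - η₂‖) * ρ₀ y * Bw' := by
            gcongr <;> first | exact hBw' y hy | exact hψdiff η₁ η₂ y | exact hρ_nonneg y | exact mul_nonneg (by positivity) (hρ_nonneg y) | positivity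
      _ = (K * Bw' * ‖η₁ - η₂‖) * ρ₀ y := by ring
  -- final constant
  refine ⟨m⁻¹ * (K * Bw') + m⁻¹ * m⁻¹ * K * Bw' + 1, by positivity, ?_⟩
  intro η₁ η₂ hη₁ hη₂
  set G₁ := ∫ y in Ω₀, ψ (η₁ - ζ y) * ρ₀ y with hG₁
  set G₂ := ∫ y in Ω₀, ψ (η₂ - ζ y) * ρ₀ y with hG₂
  set F₁ := ∫ y in Ω₀, (ψ (η₁ - ζ y) * ρ₀ y) • w y with hF₁
  set F₂ := ∫ y in Ω₀, (ψ (η₂ - ζ y) * ρ₀ y) • w y with hF₂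
  have hG₁m : m ≤ G₁ := hGlb η₁ hη₁
  have hG₂m : m ≤ G₂ := hGlb η₂ hη₂
  have hG₁0 : 0 < G₁ := lt_of_lt_of_le hm0 hG₁m
  have hG₂0 : 0 < G₂ := lt_of_lt_of_le hm0 hG₂m
  have key : G₁⁻¹ • F₁ - G₂⁻¹ • F₂ = G₁⁻¹ • (F₁ - F₂) + (G₁⁻¹ - G₂⁻¹) • F₂ := by
    rw [smul_sub, sub_smul]; abel
  rw [key]
  have hinv : |G₁⁻¹ - G₂⁻¹| ≤ m⁻¹ * m⁻¹ * (K * ‖η₁ - η₂‖) := by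
    have heq : G₁⁻¹ - G₂⁻¹ = (G₂ - G₁) * (G₁⁻¹ * G₂⁻¹) := by
      field_simp
    rw [heq, abs_mul, abs_mul, abs_of_pos (inv_pos.2 hG₁0), abs_of_pos (inv_pos.2 hG₂0)]
    have h1 : G₁⁻¹ ≤ m⁻¹ := inv_anti₀ hm0 hG₁m
    have h2 : G₂⁻¹ ≤ m⁻¹ := inv_anti₀ hm0 hG₂m
    have h3 : |G₂ - G₁| ≤ K * ‖η₁ - η₂‖ := by
      rw [abs_sub_comm]; exact hGlip η₁ η₂
    calc |G₂ - G₁| * (G₁⁻¹ * G₂⁻¹) ≤ (K * ‖η₁ - η₂‖) * (m⁻¹ * m⁻¹) := by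
          gcongr <;> first | exact h3 | exact h1 | exact h2 | exact (inv_pos.2 hG₁0).le | exact (inv_pos.2 hG₂0).le | positivity
    _ = m⁻¹ * m⁻¹ * (K * ‖η₁ - η₂‖) := by ring
  calc ‖G₁⁻¹ • (F₁ - F₂) + (G₁⁻¹ - G₂⁻¹) • F₂‖
      ≤ ‖G₁⁻¹ • (F₁ - F₂)‖ + ‖(G₁⁻¹ - G₂⁻¹) • F₂‖ := norm_add_le _ _
  _ = |G₁⁻¹| * ‖F₁ - F₂‖ + |G₁⁻¹ - G₂⁻¹| * ‖F₂‖ := by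
      rw [norm_smul, norm_smul, Real.norm_eq_abs, Real.norm_eq_abs]
  _ ≤ m⁻¹ * (K * Bw' * ‖η₁ - η₂‖) + (m⁻¹ * m⁻¹ * (K * ‖η₁ - η₂‖)) * Bw' := by
      gcongr <;> first
        | (rw [abs_of_pos (inv_pos.2 hG₁0)]; exact inv_anti₀ hm0 hG₁m)
        | exact hFlip η₁ η₂
        | exact hinv
        | exact hFub η₂
        | positivity
  _ = (m⁻¹ * (K * Bw') + m⁻¹ * m⁻¹ * K * Bw') * ‖η₁ - η₂‖ := by ring
  _ ≤ (m⁻¹ * (K * Bw') + m⁻¹ * m⁻¹ * K * Bw' + 1) * ‖η₁ - η₂‖ := by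
      apply mul_le_mul_of_nonneg_right _ (norm_nonneg _)
      linarith
end

section
/- Let C̄ > 0 and define w⁻ := (−1 − √(1 + 4·C̄))/2. Let T ∈ (0,∞] and let w : [0,T) → ℝ be differentiable with w'(t) ≤ −(w(t)² + w(t) − C̄) for all t ∈ [0,T), and suppose w(0) < w⁻. Then w(t) ≤ (t + 1/(w(0) − w⁻))^{−1} + w⁻ for all t ∈ [0,T); in particular w cannot be defined beyond time 1/(w⁻ − w(0)), i.e. T ≤ 1/(w⁻ − w(0)). -/
open Real

/-- **Supercritical case of Theorem 2.5.** If `w'(t) ≤ -(w(t)² + w(t) - C̄)` on `[0,T)`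
and `w(0) < w⁻ := (-1 - √(1 + 4C̄))/2`, then
`w(t) ≤ (t + 1/(w(0) - w⁻))⁻¹ + w⁻` on `[0,T)`, and `w` cannot be defined beyond time
`1/(w⁻ - w(0))`, i.e. `T ≤ 1/(w⁻ - w(0))`. -/
theorem stmt_17 (Cb : ℝ) (hC : 0 < Cb) (T : EReal) (hT : 0 < T)
    (w w' : ℝ → ℝ)
    (hw : ∀ t : ℝ, 0 ≤ t → (t : EReal) < T → HasDerivAt w (w' t) t)
    (hineq : ∀ t : ℝ, 0 ≤ t → (t : EReal) < T → w' t ≤ -(w t ^ 2 + w t - Cb))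
    (h0 : w 0 < (-1 - Real.sqrt (1 + 4 * Cb)) / 2) :
    (∀ t : ℝ, 0 ≤ t → (t : EReal) < T →
      w t ≤ (t + 1 / (w 0 - (-1 - Real.sqrt (1 + 4 * Cb)) / 2))⁻¹ +
        (-1 - Real.sqrt (1 + 4 * Cb)) / 2) ∧
    T ≤ ((1 / ((-1 - Real.sqrt (1 + 4 * Cb)) / 2 - w 0) : ℝ) : EReal) := by
  set s : ℝ := Real.sqrt (1 + 4 * Cb) with hsdef
  have hs2 : s ^ 2 = 1 + 4 * Cb := Real.sq_sqrt (by linarith)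
  have hs0 : 0 ≤ s := Real.sqrt_nonneg _
  have hs1 : 1 < s := by nlinarith
  set wm : ℝ := (-1 - s) / 2 with hwmdef
  set wp : ℝ := (-1 + s) / 2 with hwpdef
  have hfac : ∀ x : ℝ, x ^ 2 + x - Cb = (x - wp) * (x - wm) := by
    intro x
    rw [hwmdef, hwpdef]
    nlinarith [hs2]
  have hmplt : wm < wp := by rw [hwmdef, hwpdef]; linarith
  -- key step
  have key : ∀ t : ℝ, 0 ≤ t → (t : EReal) < T →
      t < (wm - w 0)⁻¹ ∧ w t ≤ (t + 1 / (w 0 - wm))⁻¹ + wm := by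
    intro t ht0 htT
    -- every point of [0,t] is < T
    have hmem : ∀ r : ℝ, r ∈ Set.Icc 0 t → (r : EReal) < T := by
      intro r hr
      exact lt_of_le_of_lt (EReal.coe_le_coe_iff.2 hr.2) htT
    have hcont : ContinuousOn w (Set.Icc 0 t) := fun r hr =>
      ((hw r hr.1 (hmem r hr)).continuousAt).continuousWithinAt
    -- invariance : w stays below wm
    have hlt : ∀ r ∈ Set.Icc (0:ℝ) t, w r < wm := by
      by_contra hcon
      push_neg at hcon
      obtain ⟨r₀, hr₀, hge⟩ := hcon
      set S : Set ℝ := Set.Icc 0 t ∩ w ⁻¹' Set.Ici wm with hSdef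
      have hSclosed : IsClosed S :=
        hcont.preimage_isClosed_of_isClosed isClosed_Icc isClosed_Ici
      have hSne : S.Nonempty := ⟨r₀, hr₀, hge⟩
      have hSbdd : BddBelow S := ⟨0, fun x hx => hx.1.1⟩
      have hmemS := hSclosed.csInf_mem hSne hSbdd
      set s₀ : ℝ := sInf S with hs₀def
      have hs₀Icc : s₀ ∈ Set.Icc 0 t := hmemS.1
      have hws₀ : wm ≤ w s₀ := hmemS.2
      have hbelow : ∀ r : ℝ, 0 ≤ r → r < s₀ → w r < wm := by
        intro r hr0 hrs
        by_contra hcr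
        push_neg at hcr
        have : r ∈ S := ⟨⟨hr0, le_trans (le_of_lt hrs) hs₀Icc.2⟩, hcr⟩
        exact absurd (csInf_le hSbdd this) (not_le.2 hrs)
      have hs₀pos : 0 < s₀ := by
        rcases lt_or_eq_of_le hs₀Icc.1 with h | h
        · exact h
        · exfalso; rw [← h] at hws₀; linarith
      -- w is strictly antitone on [0, s₀]
      have hanti : StrictAntiOn w (Set.Icc 0 s₀) := by
        apply strictAntiOn_of_deriv_neg (convex_Icc 0 s₀)
        · exact hcont.mono (Set.Icc_subset_Icc_right hs₀Icc.2)
        · intro r hr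
          rw [interior_Icc] at hr
          have hr0 : (0:ℝ) ≤ r := le_of_lt hr.1
          have hrt : r ∈ Set.Icc (0:ℝ) t :=
            ⟨hr0, le_trans (le_of_lt hr.2) hs₀Icc.2⟩
          have hd := hw r hr0 (hmem r hrt)
          rw [hd.deriv]
          have hi := hineq r hr0 (hmem r hrt)
          have hwr : w r < wm := hbelow r hr0 hr.2
          have : (0:ℝ) < (w r - wp) * (w r - wm) := by nlinarith
          rw [hfac (w r)] at hi
          linarith
      have := hanti (Set.left_mem_Icc.2 (le_of_lt hs₀pos))
        (Set.right_mem_Icc.2 (le_of_lt hs₀pos)) hs₀pos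
      linarith
    -- the auxiliary function g r = (wm - w r)⁻¹ + r is antitone on [0,t]
    have hpos : ∀ r ∈ Set.Icc (0:ℝ) t, 0 < wm - w r := fun r hr => by
      have := hlt r hr; linarith
    have hgd : ∀ r ∈ Set.Icc (0:ℝ) t,
        HasDerivAt (fun x => (wm - w x)⁻¹ + x)
          (-(-(w' r)) / (wm - w r) ^ 2 + 1) r := by
      intro r hr
      have h1 : HasDerivAt (fun x => wm - w x) (-(w' r)) r := by
        exact (hw r hr.1 (hmem r hr)).const_sub wm
      exact (h1.inv (ne_of_gt (hpos r hr))).add (hasDerivAt_id r)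
    have hganti : AntitoneOn (fun x => (wm - w x)⁻¹ + x) (Set.Icc 0 t) := by
      apply antitoneOn_of_deriv_nonpos (convex_Icc 0 t)
      · intro r hr
        exact (hgd r hr).continuousAt.continuousWithinAt
      · intro r hr
        rw [interior_Icc] at hr
        exact ((hgd r ⟨le_of_lt hr.1, le_of_lt hr.2⟩).differentiableAt).differentiableWithinAt
      · intro r hr
        rw [interior_Icc] at hr
        have hr' : r ∈ Set.Icc (0:ℝ) t := ⟨le_of_lt hr.1, le_of_lt hr.2⟩
        rw [(hgd r hr').deriv]
        have hq : (0:ℝ) < (wm - w r) ^ 2 := pow_pos (hpos r hr') 2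
        have hi := hineq r hr'.1 (hmem r hr')
        have hwr : w r < wm := hlt r hr'
        have hsq : w' r ≤ -((wm - w r) ^ 2) := by
          rw [hfac (w r)] at hi
          nlinarith
        have : w' r / (wm - w r) ^ 2 ≤ -1 := by
          rw [div_le_iff₀ hq]; linarith
        have hrw : -(-(w' r)) / (wm - w r) ^ 2 = w' r / (wm - w r) ^ 2 := by
          ring_nf
        rw [hrw]; linarith
    have h0t : (0:ℝ) ∈ Set.Icc (0:ℝ) t := Set.left_mem_Icc.2 ht0
    have htt : t ∈ Set.Icc (0:ℝ) t := Set.right_mem_Icc.2 ht0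
    have hg := hganti h0t htt ht0
    simp only at hg
    have hpt : 0 < wm - w t := hpos t htt
    have hp0 : 0 < wm - w 0 := hpos 0 h0t
    have hut : 0 < (wm - w t)⁻¹ := inv_pos.2 hpt
    have hu0 : 0 < (wm - w 0)⁻¹ := inv_pos.2 hp0
    -- hg : (wm - w t)⁻¹ + t ≤ (wm - w 0)⁻¹ + 0
    have htlt : t < (wm - w 0)⁻¹ := by linarith
    refine ⟨htlt, ?_⟩
    have hle : (wm - w t)⁻¹ ≤ (wm - w 0)⁻¹ - t := by linarith
    have hinv : ((wm - w 0)⁻¹ - t)⁻¹ ≤ wm - w t := by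
      have := inv_anti₀ hut hle
      rwa [inv_inv] at this
    have heq : t + 1 / (w 0 - wm) = -((wm - w 0)⁻¹ - t) := by
      have hne : w 0 - wm ≠ 0 := by intro h; rw [sub_eq_zero] at h; linarith
      have hne' : wm - w 0 ≠ 0 := ne_of_gt hp0
      field_simp
      ring
    rw [heq, inv_neg]
    linarith
  constructor
  · intro t ht0 htT
    exact (key t ht0 htT).2
  · by_contra hcon
    push_neg at hcon
    have hp0 : 0 < wm - w 0 := by linarith
    have hu0 : (0:ℝ) < 1 / (wm - w 0) := by positivity
    have hlt : ((1 / (wm - w 0) : ℝ) : EReal) < T := hcon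
    have := (key (1 / (wm - w 0)) (le_of_lt hu0) hlt).1
    rw [one_div] at this
    exact lt_irrefl _ this
end

section
/- Let C > 0 and R > 0. Let ψ : ℝ → (0,∞) be continuously differentiable with |ψ'(x)| ≤ C·ψ(x) for all x ∈ ℝ, let ρ : ℝ → [0,∞) be integrable with ∫_ℝ ρ(y) dy = 1, and let u : ℝ → ℝ be measurable with |u(y)| ≤ R for all y ∈ ℝ. Assume all the integrals below are well defined. Then the function x ↦ (∫_ℝ ψ(x−y)·u(y)·ρ(y) dy) / (∫_ℝ ψ(x−y)·ρ(y) dy) is differentiable on ℝ and its derivative is bounded in absolute value by 2·C·R at every point. -/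
open MeasureTheory Real

lemma grow_aux (C : ℝ) (hC : 0 ≤ C) (ψ : ℝ → ℝ) (hψ_pos : ∀ x, 0 < ψ x)
    (hψ_diff : Differentiable ℝ ψ) (hψ' : ∀ x, |deriv ψ x| ≤ C * ψ x) :
    ∀ a b : ℝ, ψ a ≤ ψ b * Real.exp (C * |a - b|) := by
  have hL : ∀ t, HasDerivAt (fun s => Real.log (ψ s)) (deriv ψ t / ψ t) t := fun t =>
    ((hψ_diff t).hasDerivAt).log (hψ_pos t).ne'
  have hlip : LipschitzWith C.toNNReal (fun s => Real.log (ψ s)) := by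
    apply lipschitzWith_of_nnnorm_deriv_le (fun t => (hL t).differentiableAt)
    intro t
    rw [(hL t).deriv, ← NNReal.coe_le_coe, coe_nnnorm, Real.norm_eq_abs,
      Real.coe_toNNReal _ hC, abs_div, abs_of_pos (hψ_pos t), div_le_iff₀ (hψ_pos t)]
    exact hψ' t
  intro a b
  have hd := hlip.dist_le_mul a b
  rw [Real.dist_eq, Real.dist_eq, Real.coe_toNNReal _ hC] at hd
  have h1 : Real.log (ψ a) ≤ Real.log (ψ b) + C * |a - b| := by
    have h2 := (abs_le.mp hd).2
    linarith [h2]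
  calc ψ a = Real.exp (Real.log (ψ a)) := (Real.exp_log (hψ_pos a)).symm
    _ ≤ Real.exp (Real.log (ψ b) + C * |a - b|) := Real.exp_le_exp.mpr h1
    _ = ψ b * Real.exp (C * |a - b|) := by
        rw [Real.exp_add, Real.exp_log (hψ_pos b)]

lemma diff_under (C R : ℝ) (hC : 0 ≤ C) (hR : 0 ≤ R) (ψ : ℝ → ℝ)
    (hψ_pos : ∀ x, 0 < ψ x) (hψ_diff : Differentiable ℝ ψ)
    (hψ' : ∀ x, |deriv ψ x| ≤ C * ψ x)
    (ρ : ℝ → ℝ) (hρ_nonneg : ∀ y, 0 ≤ ρ y)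
    (v : ℝ → ℝ) (hv : ∀ y, |v y| ≤ R)
    (hintA : ∀ x : ℝ, Integrable (fun y => ψ (x - y) * v y * ρ y))
    (hintB : ∀ x : ℝ, Integrable (fun y => deriv ψ (x - y) * v y * ρ y))
    (hint2 : ∀ x : ℝ, Integrable (fun y => ψ (x - y) * ρ y))
    (x : ℝ) :
    HasDerivAt (fun z => ∫ y, ψ (z - y) * v y * ρ y)
      (∫ y, deriv ψ (x - y) * v y * ρ y) x := by
  have hgrow := grow_aux C hC ψ hψ_pos hψ_diff hψ'
  have key := hasDerivAt_integral_of_dominated_loc_of_deriv_le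
    (μ := (volume : Measure ℝ))
    (F := fun z y => ψ (z - y) * v y * ρ y)
    (F' := fun z y => deriv ψ (z - y) * v y * ρ y)
    (x₀ := x)
    (bound := fun y => C * R * Real.exp C * (ψ (x - y) * ρ y))
    (s := Metric.ball x 1) (Metric.ball_mem_nhds x zero_lt_one)
    (Filter.Eventually.of_forall fun z => (hintA z).aestronglyMeasurable)
    (hintA x)
    ((hintB x).aestronglyMeasurable)
    ?_ (((hint2 x).const_mul _)) ?_
  · exact key.2
  · -- bound
    refine Filter.Eventually.of_forall fun y => fun z hz => ?_
    have hzx : |z - x| ≤ 1 := by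
      have := Metric.mem_ball.mp hz
      rw [Real.dist_eq] at this
      linarith
    have hψgrow : ψ (z - y) ≤ ψ (x - y) * Real.exp C := by
      calc ψ (z - y) ≤ ψ (x - y) * Real.exp (C * |z - y - (x - y)|) := hgrow _ _
        _ ≤ ψ (x - y) * Real.exp C := by
            apply mul_le_mul_of_nonneg_left _ (hψ_pos _).le
            apply Real.exp_le_exp.mpr
            have : z - y - (x - y) = z - x := by ring
            rw [this]
            nlinarith [abs_nonneg (z - x)]
    rw [Real.norm_eq_abs, abs_mul, abs_mul, abs_of_nonneg (hρ_nonneg y)]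
    have h1 : |deriv ψ (z - y)| * |v y| ≤ C * ψ (z - y) * R :=
      mul_le_mul (hψ' _) (hv y) (abs_nonneg _) (mul_nonneg hC (hψ_pos _).le)
    have h2 : C * ψ (z - y) * R ≤ C * (ψ (x - y) * Real.exp C) * R := by
      apply mul_le_mul_of_nonneg_right _ hR
      exact mul_le_mul_of_nonneg_left hψgrow hC
    calc |deriv ψ (z - y)| * |v y| * ρ y
        ≤ C * (ψ (x - y) * Real.exp C) * R * ρ y :=
          mul_le_mul_of_nonneg_right (h1.trans h2) (hρ_nonneg y)
      _ = C * R * Real.exp C * (ψ (x - y) * ρ y) := by ring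
  · -- differentiability
    refine Filter.Eventually.of_forall fun y => fun z _ => ?_
    have h : HasDerivAt (fun w : ℝ => ψ (w - y)) (deriv ψ (z - y)) z := by
      have := ((hψ_diff (z - y)).hasDerivAt).comp z
        ((hasDerivAt_id z).sub_const y)
      simpa [Function.comp_def] using this
    simpa [mul_assoc] using h.mul_const (v y * ρ y)

/-- **Uniform derivative bound for the normalized alignment force (Theorem 2.5).**
If `|ψ'| ≤ C ψ` with `ψ > 0`, `ρ ≥ 0` with `∫ ρ = 1`, and `|u| ≤ R`, then
`x ↦ (∫ ψ(x-y) u(y) ρ(y) dy) / (∫ ψ(x-y) ρ(y) dy)` is differentiable with derivative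
bounded in absolute value by `2 C R` everywhere. -/
theorem stmt_18 (C R : ℝ) (hC : 0 < C) (hR : 0 < R)
    (ψ : ℝ → ℝ) (hψ_pos : ∀ x, 0 < ψ x)
    (hψ_diff : Differentiable ℝ ψ) (hψ'_cont : Continuous (deriv ψ))
    (hψ' : ∀ x, |deriv ψ x| ≤ C * ψ x)
    (ρ : ℝ → ℝ) (hρ_nonneg : ∀ y, 0 ≤ ρ y) (hρ_int : Integrable ρ)
    (hρ_one : ∫ y, ρ y = 1)
    (u : ℝ → ℝ) (hu_meas : Measurable u) (hu_bdd : ∀ y, |u y| ≤ R)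
    (hint1 : ∀ x : ℝ, Integrable (fun y => ψ (x - y) * u y * ρ y))
    (hint2 : ∀ x : ℝ, Integrable (fun y => ψ (x - y) * ρ y))
    (hint3 : ∀ x : ℝ, Integrable (fun y => deriv ψ (x - y) * u y * ρ y))
    (hint4 : ∀ x : ℝ, Integrable (fun y => deriv ψ (x - y) * ρ y)) :
    ∀ x : ℝ, ∃ D : ℝ,
      HasDerivAt (fun z => (∫ y, ψ (z - y) * u y * ρ y) / (∫ y, ψ (z - y) * ρ y)) D x ∧
      |D| ≤ 2 * C * R := by
  intro x
  -- positivity of the denominator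
  have hGnonneg : ∀ z : ℝ, (0:ℝ) ≤ ∫ y, ψ (z - y) * ρ y :=
    fun z => integral_nonneg fun y => mul_nonneg (hψ_pos _).le (hρ_nonneg y)
  have hGpos : ∀ z : ℝ, (0:ℝ) < ∫ y, ψ (z - y) * ρ y := by
    intro z
    rcases (hGnonneg z).lt_or_eq with h | h
    · exact h
    · exfalso
      have h0 : (fun y => ψ (z - y) * ρ y) =ᵐ[volume] 0 :=
        (integral_eq_zero_iff_of_nonneg
          (fun y => mul_nonneg (hψ_pos _).le (hρ_nonneg y)) (hint2 z)).mp h.symm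
      have hρ0 : ρ =ᵐ[volume] 0 := by
        refine h0.mono fun y hy => ?_
        have hy' : ψ (z - y) * ρ y = 0 := hy
        rcases mul_eq_zero.mp hy' with h' | h'
        · exact absurd h' (hψ_pos _).ne'
        · exact h'
      have : (∫ y, ρ y) = 0 := by
        rw [integral_congr_ae hρ0]; simp
      rw [hρ_one] at this
      exact one_ne_zero this
  -- derivatives of numerator and denominator
  have hF : HasDerivAt (fun z => ∫ y, ψ (z - y) * u y * ρ y)
      (∫ y, deriv ψ (x - y) * u y * ρ y) x :=
    diff_under C R hC.le hR.le ψ hψ_pos hψ_diff hψ' ρ hρ_nonneg u hu_bdd hint1 hint3 hint2 x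
  have hG : HasDerivAt (fun z => ∫ y, ψ (z - y) * ρ y)
      (∫ y, deriv ψ (x - y) * ρ y) x := by
    have := diff_under C 1 hC.le zero_le_one ψ hψ_pos hψ_diff hψ' ρ hρ_nonneg
      (fun _ => 1) (fun y => by simp)
      (fun z => by simpa [mul_one] using hint2 z)
      (fun z => by simpa [mul_one] using hint4 z)
      hint2 x
    simpa [mul_one] using this
  have hD := hF.div hG (hGpos x).ne'
  refine ⟨_, hD, ?_⟩
  set g := ∫ y, ψ (x - y) * ρ y with hg
  set a := ∫ y, ψ (x - y) * u y * ρ y with ha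
  set a' := ∫ y, deriv ψ (x - y) * u y * ρ y with ha'
  set b' := ∫ y, deriv ψ (x - y) * ρ y with hb'
  have hgpos : 0 < g := hGpos x
  -- bounds on the three integrals
  have habs : ∀ (f : ℝ → ℝ), |∫ y, f y| ≤ ∫ y, |f y| := fun f => by
    simpa [Real.norm_eq_abs] using norm_integral_le_integral_norm f
  have bnd_a : |a| ≤ R * g := by
    calc |a| ≤ ∫ y, |ψ (x - y) * u y * ρ y| := habs _
      _ ≤ ∫ y, R * (ψ (x - y) * ρ y) := by
          apply integral_mono (hint1 x).abs ((hint2 x).const_mul _)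
          intro y
          dsimp only
          rw [abs_mul, abs_mul, abs_of_pos (hψ_pos _), abs_of_nonneg (hρ_nonneg y)]
          calc ψ (x - y) * |u y| * ρ y ≤ ψ (x - y) * R * ρ y :=
                mul_le_mul_of_nonneg_right
                  (mul_le_mul_of_nonneg_left (hu_bdd y) (hψ_pos _).le) (hρ_nonneg y)
            _ = R * (ψ (x - y) * ρ y) := by ring
      _ = R * g := by rw [integral_const_mul]
  have bnd_a' : |a'| ≤ C * R * g := by
    calc |a'| ≤ ∫ y, |deriv ψ (x - y) * u y * ρ y| := habs _
      _ ≤ ∫ y, C * R * (ψ (x - y) * ρ y) := by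
          apply integral_mono (hint3 x).abs ((hint2 x).const_mul _)
          intro y
          dsimp only
          rw [abs_mul, abs_mul, abs_of_nonneg (hρ_nonneg y)]
          have h1 : |deriv ψ (x - y)| * |u y| ≤ C * ψ (x - y) * R :=
            mul_le_mul (hψ' _) (hu_bdd y) (abs_nonneg _) (mul_nonneg hC.le (hψ_pos _).le)
          calc |deriv ψ (x - y)| * |u y| * ρ y ≤ C * ψ (x - y) * R * ρ y :=
                mul_le_mul_of_nonneg_right h1 (hρ_nonneg y)
            _ = C * R * (ψ (x - y) * ρ y) := by ring
      _ = C * R * g := by rw [integral_const_mul]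
  have bnd_b' : |b'| ≤ C * g := by
    calc |b'| ≤ ∫ y, |deriv ψ (x - y) * ρ y| := habs _
      _ ≤ ∫ y, C * (ψ (x - y) * ρ y) := by
          apply integral_mono (hint4 x).abs ((hint2 x).const_mul _)
          intro y
          dsimp only
          rw [abs_mul, abs_of_nonneg (hρ_nonneg y)]
          calc |deriv ψ (x - y)| * ρ y ≤ C * ψ (x - y) * ρ y :=
                mul_le_mul_of_nonneg_right (hψ' _) (hρ_nonneg y)
            _ = C * (ψ (x - y) * ρ y) := by ring
      _ = C * g := by rw [integral_const_mul]
  -- combine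
  rw [abs_div, abs_of_pos (pow_pos hgpos 2), div_le_iff₀ (pow_pos hgpos 2)]
  have htri : |a' * g - a * b'| ≤ |a' * g| + |a * b'| := abs_sub _ _
  rw [abs_mul, abs_mul, abs_of_pos hgpos] at htri
  nlinarith [abs_nonneg a, abs_nonneg a', abs_nonneg b', mul_le_mul_of_nonneg_right bnd_a' hgpos.le, mul_le_mul bnd_a bnd_b' (abs_nonneg b') (by positivity : (0:ℝ) ≤ R * g)]
end
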